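/- arXiv:math/0703387 — 7 statements merged into one kernel-verified Lean document; each statement's English description precedes it below -/
import Mathlib

section
/- For any normed space X over 𝕂 and any continuous symmetric n-linear form L on X, the norm of its diagonal (the associated n-homogeneous polynomial x ↦ L(x,...,x)) satisfies ‖L̂‖ ≤ ‖L‖ ≤ (n^n / n!) ‖L̂‖, where ‖L̂‖ = sup_{‖x‖≤1} |L(x,...,x)|. -/
open Finset

section PolarizationAux
variable {𝕜 X : Type*} [RCLike 𝕜] [NormedAddCommGroup X] [NormedSpace 𝕜 X]
private def sgn (𝕜 : Type*) [RCLike 𝕜] (b : Bool) : 𝕜 := if b then 1 else -1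

private lemma sgn_norm (b : Bool) : ‖sgn 𝕜 b‖ = 1 := by
  cases b <;> simp [sgn]

private lemma coeff_eq (n : ℕ) (r : Fin n → Fin n) :
    (∑ ε : Fin n → Bool, (∏ i, sgn 𝕜 (ε i)) * ∏ j, sgn 𝕜 (ε (r j)))
      = if Function.Bijective r then (2 ^ n : 𝕜) else 0 := by
  have key : ∀ ε : Fin n → Bool,
      (∏ i, sgn 𝕜 (ε i)) * ∏ j, sgn 𝕜 (ε (r j))
        = ∏ i, sgn 𝕜 (ε i) ^ (#{j | r j = i} + 1) := by
    intro ε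
    rw [← Finset.prod_fiberwise' Finset.univ r (fun i => sgn 𝕜 (ε i)), ← Finset.prod_mul_distrib]
    refine Finset.prod_congr rfl fun i _ => ?_
    rw [Finset.prod_const, pow_succ, mul_comm]
  simp_rw [key]
  rw [← Fintype.piFinset_univ, ← Finset.prod_univ_sum (fun _ : Fin n => (Finset.univ : Finset Bool)) (fun i b => sgn 𝕜 b ^ (#{j | r j = i} + 1))]
  have hfac : ∀ i : Fin n, (∑ b : Bool, sgn 𝕜 b ^ (#{j | r j = i} + 1))
      = if Even (#{j | r j = i} + 1) then 2 else 0 := by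
    intro i
    rcases Nat.even_or_odd (#{j | r j = i} + 1) with h | h
    · simp [sgn, Fintype.sum_bool, h, h.neg_one_pow]
    · simp [sgn, Fintype.sum_bool, Nat.not_even_iff_odd.2 h, h.neg_one_pow]
  simp_rw [hfac]
  by_cases hb : Function.Bijective r
  · have hone : ∀ i : Fin n, #{j | r j = i} = 1 := by
      intro i
      obtain ⟨j0, hj0⟩ := hb.2 i
      have : ({j | r j = i} : Finset (Fin n)) = {j0} := by
        ext k
        simp only [Finset.mem_filter, Finset.mem_univ, true_and, Finset.mem_singleton]
        exact ⟨fun hk => hb.1 (hk.trans hj0.symm), fun hk => hk ▸ hj0⟩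
      rw [this, Finset.card_singleton]
    rw [if_pos hb]
    simp [hone]
  · have : ¬ Function.Surjective r := fun h => hb (Finite.surjective_iff_bijective.1 h)
    obtain ⟨i, hi⟩ := not_forall.1 this
    push_neg at hi
    have hcard : #{j | r j = i} = 0 := by
      rw [Finset.card_eq_zero]
      ext j; simp [hi j]
    rw [if_neg hb]
    refine Finset.prod_eq_zero (Finset.mem_univ i) ?_
    simp [hcard]

private lemma card_bij_filter (n : ℕ) :
    #{r : Fin n → Fin n | Function.Bijective r} = Nat.factorial n := by
  rw [← Fintype.card_subtype, show Nat.factorial n = Fintype.card (Equiv.Perm (Fin n)) by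
    rw [Fintype.card_perm, Fintype.card_fin]]
  refine Fintype.card_congr ?_
  refine ⟨fun r => Equiv.ofBijective r (by simpa using r.2), fun σ => ⟨σ, by simp [σ.bijective]⟩,
    fun r => ?_, fun σ => ?_⟩
  · ext j; rfl
  · ext j; rfl

private lemma polar (n : ℕ) (L : ContinuousMultilinearMap 𝕜 (fun _ : Fin n => X) 𝕜)
    (hsymm : ∀ (σ : Equiv.Perm (Fin n)) (x : Fin n → X), L (x ∘ σ) = L x) (x : Fin n → X) :
    ∑ ε : Fin n → Bool, (∏ i, sgn 𝕜 (ε i)) • L (fun _ => ∑ i, sgn 𝕜 (ε i) • x i)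
      = ((Nat.factorial n * 2 ^ n : ℕ) : 𝕜) • L x := by
  have expand : ∀ ε : Fin n → Bool, L (fun _ : Fin n => ∑ i, sgn 𝕜 (ε i) • x i)
      = ∑ r : Fin n → Fin n, (∏ j, sgn 𝕜 (ε (r j))) • L (x ∘ r) := by
    intro ε
    rw [L.map_sum (fun (_ : Fin n) (i : Fin n) => sgn 𝕜 (ε i) • x i)]
    refine Finset.sum_congr rfl fun r _ => ?_
    exact L.map_smul_univ (fun j => sgn 𝕜 (ε (r j))) (fun j => x (r j))
  calc ∑ ε : Fin n → Bool, (∏ i, sgn 𝕜 (ε i)) • L (fun _ => ∑ i, sgn 𝕜 (ε i) • x i)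
      = ∑ ε : Fin n → Bool, ∑ r : Fin n → Fin n,
          ((∏ i, sgn 𝕜 (ε i)) * ∏ j, sgn 𝕜 (ε (r j))) • L (x ∘ r) := by
        simp_rw [expand, Finset.smul_sum, smul_smul]
    _ = ∑ r : Fin n → Fin n,
          (∑ ε : Fin n → Bool, (∏ i, sgn 𝕜 (ε i)) * ∏ j, sgn 𝕜 (ε (r j))) • L (x ∘ r) := by
        rw [Finset.sum_comm]
        simp_rw [Finset.sum_smul]
    _ = ∑ r : Fin n → Fin n, (if Function.Bijective r then (2 ^ n : 𝕜) else 0) • L (x ∘ r) := by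
        simp_rw [coeff_eq]
    _ = ∑ r ∈ ({r : Fin n → Fin n | Function.Bijective r} : Finset _), (2 ^ n : 𝕜) • L (x ∘ r) := by
        simp_rw [ite_smul, zero_smul]
        rw [Finset.sum_filter]
    _ = ∑ _r ∈ ({r : Fin n → Fin n | Function.Bijective r} : Finset _), (2 ^ n : 𝕜) • L x := by
        refine Finset.sum_congr rfl fun r hr => ?_
        rw [Finset.mem_filter] at hr
        rw [show x ∘ r = x ∘ (Equiv.ofBijective r hr.2) from rfl, hsymm]
    _ = ((Nat.factorial n * 2 ^ n : ℕ) : 𝕜) • L x := by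
        rw [Finset.sum_const, card_bij_filter, ← Nat.cast_smul_eq_nsmul 𝕜, smul_smul]
        norm_cast


end PolarizationAux


open scoped BigOperators

/-- The `‖L̂‖ ≤ ‖L‖ ≤ (n^n/n!)‖L̂‖` inequality for continuous symmetric n-linear forms. -/
theorem polarization_inequality {𝕜 X : Type*} [RCLike 𝕜] [NormedAddCommGroup X]
    [NormedSpace 𝕜 X] (n : ℕ)
    (L : ContinuousMultilinearMap 𝕜 (fun _ : Fin n => X) 𝕜)
    (hsymm : ∀ (σ : Equiv.Perm (Fin n)) (x : Fin n → X), L (x ∘ σ) = L x) :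
    sSup {y : ℝ | ∃ x : X, ‖x‖ ≤ 1 ∧ y = ‖L (fun _ => x)‖} ≤ ‖L‖ ∧
      ‖L‖ ≤ ((n : ℝ) ^ n / (Nat.factorial n : ℝ)) *
        sSup {y : ℝ | ∃ x : X, ‖x‖ ≤ 1 ∧ y = ‖L (fun _ => x)‖} := by
  classical
  set T : Set ℝ := {y : ℝ | ∃ x : X, ‖x‖ ≤ 1 ∧ y = ‖L (fun _ => x)‖} with hT
  set S : ℝ := sSup T with hSdef
  have hprodpow : ∀ x : X, (∏ _i : Fin n, ‖x‖) = ‖x‖ ^ n := by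
    intro x; simp
  have hmemle : ∀ y ∈ T, y ≤ ‖L‖ := by
    rintro y ⟨x, hx, rfl⟩
    calc ‖L (fun _ => x)‖ ≤ ‖L‖ * ∏ _i : Fin n, ‖x‖ := L.le_opNorm _
      _ ≤ ‖L‖ * 1 := by
          refine mul_le_mul_of_nonneg_left ?_ (norm_nonneg L)
          rw [hprodpow]
          exact pow_le_one₀ (norm_nonneg x) hx
      _ = ‖L‖ := mul_one _
  have hne : T.Nonempty := ⟨‖L (fun _ => (0 : X))‖, 0, by simp, rfl⟩
  have hbdd : BddAbove T := ⟨‖L‖, hmemle⟩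
  have hS0 : (0 : ℝ) ≤ S := le_trans (norm_nonneg (L fun _ => (0:X))) (le_csSup hbdd ⟨0, by simp, rfl⟩)
  have hmem : ∀ x : X, ‖x‖ ≤ 1 → ‖L (fun _ => x)‖ ≤ S :=
    fun x hx => le_csSup hbdd ⟨x, hx, rfl⟩
  have hS : ∀ y : X, ‖L (fun _ => y)‖ ≤ S * ‖y‖ ^ n := by
    intro y
    rcases Nat.eq_zero_or_pos n with hn | hn
    · subst hn
      have he : (fun _ : Fin 0 => y) = (fun _ : Fin 0 => (0 : X)) := funext fun i => i.elim0
      rw [he, pow_zero, mul_one]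
      exact hmem 0 (by simp)
    · by_cases hy : y = 0
      · subst hy
        rw [L.map_coord_zero (⟨0, hn⟩ : Fin n) rfl]
        simp [zero_pow (Nat.pos_iff_ne_zero.1 hn)]
      · have hy' : (‖y‖ : ℝ) ≠ 0 := norm_ne_zero_iff.2 hy
        set c : 𝕜 := (‖y‖ : 𝕜) with hc
        have hc0 : c ≠ 0 := by
          simpa [hc] using hy'
        set u : X := c⁻¹ • y with hu
        have hnu : ‖u‖ = 1 := by
          rw [hu, norm_smul, norm_inv]
          rw [hc, RCLike.norm_ofReal, abs_of_nonneg (norm_nonneg y)]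
          field_simp
        have hcu : ∀ _i : Fin n, c • u = y := by
          intro _; rw [hu, smul_smul, mul_inv_cancel₀ hc0, one_smul]
        have : L (fun _ => y) = (∏ _i : Fin n, c) • L (fun _ => u) := by
          rw [← L.map_smul_univ (fun _ => c) (fun _ => u)]
          congr 1
          funext i
          exact (hcu i).symm
        rw [this, norm_smul]
        have hnc : ‖∏ _i : Fin n, c‖ = ‖y‖ ^ n := by
          rw [Finset.prod_const]
          simp [hc, norm_pow, RCLike.norm_ofReal, abs_of_nonneg (norm_nonneg y)]
        rw [hnc, mul_comm]
        exact mul_le_mul_of_nonneg_right (hmem u (le_of_eq hnu)) (pow_nonneg (norm_nonneg y) n)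
  refine ⟨csSup_le hne hmemle, ?_⟩
  -- second inequality
  have hunit : ∀ x : Fin n → X, (∀ i, ‖x i‖ ≤ 1) →
      ‖L x‖ ≤ ((n : ℝ) ^ n / (Nat.factorial n : ℝ)) * S := by
    intro x hx
    have hpolar := polar n L hsymm x
    have hnorm : ((Nat.factorial n * 2 ^ n : ℕ) : ℝ) * ‖L x‖
        = ‖∑ ε : Fin n → Bool, (∏ i, sgn 𝕜 (ε i)) • L (fun _ => ∑ i, sgn 𝕜 (ε i) • x i)‖ := by
      rw [hpolar, norm_smul, RCLike.norm_natCast]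
    have hbound : ‖∑ ε : Fin n → Bool, (∏ i, sgn 𝕜 (ε i)) • L (fun _ => ∑ i, sgn 𝕜 (ε i) • x i)‖
        ≤ (2 : ℝ) ^ n * (S * (n : ℝ) ^ n) := by
      calc ‖∑ ε : Fin n → Bool, (∏ i, sgn 𝕜 (ε i)) • L (fun _ => ∑ i, sgn 𝕜 (ε i) • x i)‖
          ≤ ∑ ε : Fin n → Bool, ‖(∏ i, sgn 𝕜 (ε i)) • L (fun _ => ∑ i, sgn 𝕜 (ε i) • x i)‖ :=
            norm_sum_le _ _
        _ ≤ ∑ _ε : Fin n → Bool, S * (n : ℝ) ^ n := by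
            refine Finset.sum_le_sum fun ε _ => ?_
            rw [norm_smul]
            have h1 : ‖∏ i, sgn 𝕜 (ε i)‖ = 1 := by
              rw [norm_prod]
              simp [sgn_norm]
            rw [h1, one_mul]
            refine le_trans (hS _) ?_
            refine mul_le_mul_of_nonneg_left ?_ hS0
            have hsum : ‖∑ i, sgn 𝕜 (ε i) • x i‖ ≤ (n : ℝ) := by
              refine le_trans (norm_sum_le _ _) ?_
              calc ∑ i, ‖sgn 𝕜 (ε i) • x i‖ ≤ ∑ _i : Fin n, (1 : ℝ) := by
                    refine Finset.sum_le_sum fun i _ => ?_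
                    rw [norm_smul, sgn_norm, one_mul]
                    exact hx i
                _ = (n : ℝ) := by simp
            exact pow_le_pow_left₀ (norm_nonneg _) hsum n
        _ = (2 : ℝ) ^ n * (S * (n : ℝ) ^ n) := by
            rw [Finset.sum_const]
            simp [Fintype.card_fun, mul_comm]
    have hfacpos : (0 : ℝ) < (Nat.factorial n : ℝ) := by
      exact_mod_cast Nat.factorial_pos n
    have h2pos : (0 : ℝ) < (2 : ℝ) ^ n := by positivity
    rw [div_mul_eq_mul_div, le_div_iff₀ hfacpos]
    have := hnorm ▸ hbound
    push_cast at this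
    nlinarith [this]
  refine L.opNorm_le_bound (by positivity) ?_
  intro x
  by_cases hz : ∃ i, x i = 0
  · obtain ⟨i, hi⟩ := hz
    rw [L.map_coord_zero i hi, norm_zero]
    have : (0:ℝ) ≤ ∏ i, ‖x i‖ := Finset.prod_nonneg fun i _ => norm_nonneg _
    positivity
  · push_neg at hz
    set u : Fin n → X := fun i => (‖x i‖ : 𝕜)⁻¹ • x i with hu
    have hnu : ∀ i, ‖u i‖ = 1 := by
      intro i
      rw [hu, norm_smul, norm_inv, RCLike.norm_ofReal, abs_of_nonneg (norm_nonneg _),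
        inv_mul_cancel₀ (norm_ne_zero_iff.2 (hz i))]
    have hx : L x = (∏ i, (‖x i‖ : 𝕜)) • L u := by
      rw [← L.map_smul_univ (fun i => (‖x i‖ : 𝕜)) u]
      congr 1
      funext i
      rw [hu, smul_smul, mul_inv_cancel₀ (by simpa using norm_ne_zero_iff.2 (hz i)), one_smul]
    rw [hx, norm_smul, norm_prod]
    have hn : ∀ i : Fin n, ‖((‖x i‖ : ℝ) : 𝕜)‖ = ‖x i‖ := fun i => by
      rw [RCLike.norm_ofReal, abs_of_nonneg (norm_nonneg _)]
    calc (∏ i, ‖((‖x i‖ : ℝ) : 𝕜)‖) * ‖L u‖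
        ≤ (∏ i, ‖x i‖) * (((n : ℝ) ^ n / (Nat.factorial n : ℝ)) * S) := by
          rw [Finset.prod_congr rfl fun i _ => hn i]
          exact mul_le_mul_of_nonneg_left (hunit u fun i => le_of_eq (hnu i))
            (Finset.prod_nonneg fun i _ => norm_nonneg _)
      _ = ((n : ℝ) ^ n / (Nat.factorial n : ℝ)) * S * ∏ i, ‖x i‖ := by ring
end

section
/- If H is a Hilbert space over 𝕂 and L is a continuous symmetric n-linear form on H, then ‖L‖ = ‖L̂‖, i.e., the norm of the symmetric multilinear form equals the sup-norm of its diagonal homogeneous polynomial on the unit ball (Banach's theorem). -/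
open scoped BigOperators
open Function

theorem comp_swap_update {n : ℕ} {β : Type*} (f : Fin n → β) (i j : Fin n) (h : i ≠ j) (p q : β) :
    (update (update f i p) j q) ∘ (Equiv.swap i j) = update (update f i q) j p := by
  funext k
  simp only [Function.comp_apply]
  rcases eq_or_ne k i with rfl | hki
  · rw [Equiv.swap_apply_left]; simp [update_of_ne h]
  rcases eq_or_ne k j with rfl | hkj
  · rw [Equiv.swap_apply_right]; simp [update_of_ne h]
  · rw [Equiv.swap_apply_of_ne_of_ne hki hkj]; simp [update_of_ne hki, update_of_ne hkj]

set_option maxHeartbeats 2000000 in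
theorem banach_pair {𝕜 H : Type*} [RCLike 𝕜] [NormedAddCommGroup H]
    [InnerProductSpace 𝕜 H] {n : ℕ}
    (L : ContinuousMultilinearMap 𝕜 (fun _ : Fin n => H) 𝕜)
    (hsymm : ∀ (σ : Equiv.Perm (Fin n)) (x : Fin n → H), L (x ∘ σ) = L x)
    (V : Submodule 𝕜 H)
    (K : Set H) (hK : K = {h : H | h ∈ V ∧ ‖h‖ ≤ 1})
    (KK : Set (Fin n → H)) (hKK : KK = Set.univ.pi (fun _ => K))
    (u : Fin n → H) (m : ℝ) (hm : m = ‖L u‖) (hmpos : 0 < m)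
    (humax : IsMaxOn (fun w => ‖L w‖) KK u)
    (A : Set (Fin n → H)) (hA : A = KK ∩ {w | ‖L w‖ = m})
    (v : Fin n → H) (hvA : v ∈ A)
    (hunit : ∀ i, ‖v i‖ = 1)
    (hvF : IsMaxOn (fun w => ‖∑ k, w k‖) A v)
    (i j : Fin n) (hij : i ≠ j) : v i = v j := by
  rw [hA] at hvA
  obtain ⟨hvKK, hvm⟩ := hvA
  have hvm : ‖L v‖ = m := hvm
  have hvK : ∀ k, v k ∈ K := by
    rw [hKK] at hvKK
    exact fun k => hvKK k (Set.mem_univ k)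
  have hvV : ∀ k, v k ∈ V := fun k => by have := hvK k; rw [hK] at this; exact this.1
  by_contra hne
  set P : H → H → 𝕜 := fun p q => L (update (update v i p) j q) with hP
  have hPsymm : ∀ p q, P p q = P q p := by
    intro p q
    have h1 := hsymm (Equiv.swap i j) (update (update v i p) j q)
    rw [comp_swap_update v i j hij p q] at h1
    exact h1.symm
  have hPadd₂ : ∀ p a b, P p (a + b) = P p a + P p b := by
    intro p a b; simp only [hP]; exact L.map_update_add _ j a b
  have hPsmul₂ : ∀ p (c : 𝕜) q, P p (c • q) = c * P p q := by
    intro p c q; simp only [hP]; rw [L.map_update_smul _ j c q, smul_eq_mul]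
  have hPsub₂ : ∀ p a b, P p (a - b) = P p a - P p b := by
    intro p a b; simp only [hP]; exact L.map_update_sub _ j a b
  have hPadd₁ : ∀ a b q, P (a + b) q = P a q + P b q := by
    intro a b q; rw [hPsymm, hPadd₂, hPsymm a q, hPsymm b q]
  have hPsmul₁ : ∀ (c : 𝕜) p q, P (c • p) q = c * P p q := by
    intro c p q; rw [hPsymm, hPsmul₂, hPsymm p q]
  have hPsub₁ : ∀ a b q, P (a - b) q = P a q - P b q := by
    intro a b q; rw [hPsymm, hPsub₂, hPsymm a q, hPsymm b q]
  set s := v i + v j with hs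
  set d := v i - v j with hd
  clear_value s d
  have hd0 : d ≠ 0 := by rw [hd]; exact sub_ne_zero.mpr hne
  have hpar : ‖s‖ ^ 2 + ‖d‖ ^ 2 = 4 := by
    have hplaw := parallelogram_law_with_norm 𝕜 (v i) (v j)
    rw [← hs, ← hd, hunit i, hunit j] at hplaw
    rw [pow_two, pow_two]; linarith
  have hs4 : ‖s‖ ^ 2 < 4 := by
    have hdp : 0 < ‖d‖ ^ 2 := pow_pos (norm_pos_iff.mpr hd0) 2
    linarith
  have hLvP : L v = P (v i) (v j) := by
    simp only [hP]
    congr 1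
    rw [update_eq_self, update_eq_self]
  have hexp_s : P s s = P (v i) (v i) + P (v i) (v j) + P (v j) (v i) + P (v j) (v j) := by
    simp only [hs, hPadd₁, hPadd₂]; ring
  have hexp_d : P d d = P (v i) (v i) - P (v i) (v j) - P (v j) (v i) + P (v j) (v j) := by
    simp only [hd, hPsub₁, hPsub₂]; ring
  have key : L v = (4 : 𝕜)⁻¹ * (P s s - P d d) := by
    rw [hexp_s, hexp_d, hLvP, hPsymm (v j) (v i)]; ring
  set W : H := ∑ k ∈ (Finset.univ \ {j}) \ {i}, v k with hW
  clear_value W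
  have hsum : ∀ p q, (∑ k, update (update v i p) j q k) = q + (p + W) := by
    intro p q
    rw [Finset.sum_update_of_mem (Finset.mem_univ j),
      Finset.sum_update_of_mem (show i ∈ Finset.univ \ {j} by simp [hij])]
    rw [hW]
  have hsumv : (∑ k, v k) = s + W := by
    have h1 := hsum (v i) (v j)
    rw [update_eq_self, update_eq_self] at h1
    rw [h1, hs]; abel
  have hmemK : ∀ p, p ∈ V → ‖p‖ ≤ 1 → update (update v i p) j p ∈ KK := by
    intro p hpV hp1
    rw [hKK]; intro k _
    rcases eq_or_ne k j with rfl | hkj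
    · rw [update_self, hK]; exact ⟨hpV, hp1⟩
    · rw [update_of_ne hkj]
      rcases eq_or_ne k i with rfl | hki
      · rw [update_self, hK]; exact ⟨hpV, hp1⟩
      · rw [update_of_ne hki]; exact hvK k
  obtain ⟨e, ε, heV, he1, hPee, hε, hgood⟩ :
      ∃ (e : H) (ε : ℝ), e ∈ V ∧ ‖e‖ = 1 ∧ ‖P e e‖ = m ∧ (ε = 1 ∨ ε = -1) ∧
        2 * RCLike.re (inner 𝕜 s W : 𝕜) ≤ 4 * (ε * RCLike.re (inner 𝕜 e W : 𝕜)) := by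
    rcases eq_or_ne s 0 with hs0 | hs0
    · have hvij : v i + v j = 0 := by rw [← hs]; exact hs0
      have hvj : v j = -v i := eq_neg_of_add_eq_zero_right hvij
      have hd2 : d = (2 : 𝕜) • v i := by rw [hd, hvj, sub_neg_eq_add, two_smul]
      have hP0 : P s s = 0 := by
        rw [hs0]; simp only [hP]; exact L.map_coord_zero j (update_self _ _ _)
      have hPdd : P d d = 4 * P (v i) (v i) := by
        rw [hd2, hPsmul₁, hPsmul₂]; ring
      have hLv2 : L v = -(P (v i) (v i)) := by rw [key, hP0, hPdd]; ring
      have hPiim : ‖P (v i) (v i)‖ = m := by rw [← hvm, hLv2, norm_neg]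
      refine ⟨v i, if 0 ≤ RCLike.re (inner 𝕜 (v i) W : 𝕜) then 1 else -1, hvV i, hunit i, hPiim,
        by split_ifs <;> simp, ?_⟩
      rw [hs0, inner_zero_left, map_zero, mul_zero]
      split_ifs with h
      · nlinarith
      · push_neg at h; nlinarith
    · have hsnorm : 0 < ‖s‖ := norm_pos_iff.mpr hs0
      have hdnorm : 0 < ‖d‖ := norm_pos_iff.mpr hd0
      have hcs : ((‖s‖ : ℝ) : 𝕜) ≠ 0 := RCLike.ofReal_ne_zero.mpr hsnorm.ne'
      have hcd : ((‖d‖ : ℝ) : 𝕜) ≠ 0 := RCLike.ofReal_ne_zero.mpr hdnorm.ne'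
      set a : H := ((‖s‖ : ℝ) : 𝕜)⁻¹ • s with ha
      set b : H := ((‖d‖ : ℝ) : 𝕜)⁻¹ • d with hb
      clear_value a b
      have hsa : ((‖s‖ : ℝ) : 𝕜) • a = s := by rw [ha]; exact smul_inv_smul₀ hcs s
      have hdb : ((‖d‖ : ℝ) : 𝕜) • b = d := by rw [hb]; exact smul_inv_smul₀ hcd d
      have ha1 : ‖a‖ = 1 := by
        rw [ha, norm_smul, norm_inv, RCLike.norm_ofReal, abs_of_nonneg (norm_nonneg s),
          inv_mul_cancel₀ hsnorm.ne']
      have hb1 : ‖b‖ = 1 := by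
        rw [hb, norm_smul, norm_inv, RCLike.norm_ofReal, abs_of_nonneg (norm_nonneg d),
          inv_mul_cancel₀ hdnorm.ne']
      have hsV : s ∈ V := by rw [hs]; exact V.add_mem (hvV i) (hvV j)
      have hdV : d ∈ V := by rw [hd]; exact V.sub_mem (hvV i) (hvV j)
      have haV : a ∈ V := by rw [ha]; exact V.smul_mem _ hsV
      have hbV : b ∈ V := by rw [hb]; exact V.smul_mem _ hdV
      have hPaa_le : ‖P a a‖ ≤ m := by
        have h1 := humax (hmemK a haV ha1.le)
        simp only [Set.mem_setOf_eq] at h1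
        simp only [hP]
        rw [hm]; exact h1
      have hPbb_le : ‖P b b‖ ≤ m := by
        have h1 := humax (hmemK b hbV hb1.le)
        simp only [Set.mem_setOf_eq] at h1
        simp only [hP]
        rw [hm]; exact h1
      have h1 : P s s = ((‖s‖ : ℝ) : 𝕜) * (((‖s‖ : ℝ) : 𝕜) * P a a) := by
        conv_lhs => rw [← hsa]
        rw [hPsmul₁, hPsmul₂]
      have h2 : P d d = ((‖d‖ : ℝ) : 𝕜) * (((‖d‖ : ℝ) : 𝕜) * P b b) := by
        conv_lhs => rw [← hdb]
        rw [hPsmul₁, hPsmul₂]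
      have hmle : m ≤ ‖s‖ ^ 2 / 4 * ‖P a a‖ + ‖d‖ ^ 2 / 4 * ‖P b b‖ := by
        have h3 : ‖L v‖ ≤ (4 : ℝ)⁻¹ * (‖s‖ * (‖s‖ * ‖P a a‖) + ‖d‖ * (‖d‖ * ‖P b b‖)) := by
          rw [key, h1, h2]
          refine le_trans (norm_mul_le _ _) ?_
          have h4 : ‖(4 : 𝕜)⁻¹‖ = (4 : ℝ)⁻¹ := by rw [norm_inv, RCLike.norm_ofNat]
          rw [h4]
          refine mul_le_mul_of_nonneg_left ?_ (by norm_num)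
          refine le_trans (norm_sub_le _ _) ?_
          rw [norm_mul, norm_mul, norm_mul, norm_mul, RCLike.norm_ofReal,
            abs_of_nonneg (norm_nonneg s), RCLike.norm_ofReal, abs_of_nonneg (norm_nonneg d)]
        rw [← hvm]
        refine le_trans h3 (le_of_eq ?_)
        ring
      have hlam : 0 < ‖s‖ ^ 2 / 4 := div_pos (pow_pos hsnorm 2) (by norm_num)
      have hmu : 0 < ‖d‖ ^ 2 / 4 := div_pos (pow_pos hdnorm 2) (by norm_num)
      have hlm : ‖s‖ ^ 2 / 4 + ‖d‖ ^ 2 / 4 = 1 := by linarith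
      have hPaam : ‖P a a‖ = m := by
        by_contra hne'
        have hlt : ‖P a a‖ < m := lt_of_le_of_ne hPaa_le hne'
        have hb2 := mul_le_mul_of_nonneg_left hPbb_le hmu.le
        have ha2 := mul_lt_mul_of_pos_left hlt hlam
        have hmm : ‖s‖ ^ 2 / 4 * m + ‖d‖ ^ 2 / 4 * m = m := by
          rw [← add_mul, hlm, one_mul]
        linarith
      refine ⟨a, if 0 ≤ RCLike.re (inner 𝕜 s W : 𝕜) then 1 else -1, haV, ha1, hPaam,
        by split_ifs <;> simp, ?_⟩
      have hinner : RCLike.re (inner 𝕜 a W : 𝕜) = ‖s‖⁻¹ * RCLike.re (inner 𝕜 s W : 𝕜) := by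
        rw [ha, inner_smul_left, map_inv₀, RCLike.conj_ofReal, ← RCLike.ofReal_inv,
          RCLike.re_ofReal_mul]
      rw [hinner]
      have hs2 : ‖s‖ ≤ 2 := by nlinarith [norm_nonneg s]
      have h10 : (2:ℝ)⁻¹ ≤ ‖s‖⁻¹ := by
        rw [inv_le_inv₀ (by norm_num) hsnorm]
        exact hs2
      split_ifs with hr
      · rw [one_mul]
        have h8 := mul_le_mul_of_nonneg_right h10 hr
        linarith
      · push_neg at hr
        have hneg : ‖s‖⁻¹ * RCLike.re (inner 𝕜 s W : 𝕜) < 0 :=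
          mul_neg_of_pos_of_neg (inv_pos.mpr hsnorm) hr
        linarith
  -- final contradiction
  set c : 𝕜 := ((ε : ℝ) : 𝕜) with hc
  clear_value c
  have hc2 : c * c = 1 := by
    rw [hc, ← RCLike.ofReal_mul]
    rcases hε with rfl | rfl <;> norm_num
  have hce1 : ‖c • e‖ = 1 := by
    rw [norm_smul, hc, RCLike.norm_ofReal, he1, mul_one]
    rcases hε with rfl | rfl <;> norm_num
  set z := update (update v i (c • e)) j (c • e) with hz
  clear_value z
  have hLz : ‖L z‖ = m := by
    have h1 : L z = (c * c) * P e e := by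
      rw [hz, show L (update (update v i (c • e)) j (c • e)) = P (c • e) (c • e) from by rw [hP]]
      rw [hPsmul₁, hPsmul₂]; ring
    rw [h1, hc2, one_mul, hPee]
  have hzKK : z ∈ KK := by rw [hz]; exact hmemK _ (V.smul_mem _ heV) hce1.le
  have hzA : z ∈ A := by rw [hA]; exact ⟨hzKK, hLz⟩
  have hFle := hvF hzA
  simp only [Set.mem_setOf_eq] at hFle
  have hsz : (∑ k, z k) = ((2 * ε : ℝ) : 𝕜) • e + W := by
    rw [hz, hsum (c • e) (c • e)]
    rw [show ((2 * ε : ℝ) : 𝕜) • e = c • e + c • e by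
      rw [show (2 * ε : ℝ) = ε + ε by ring, RCLike.ofReal_add, ← hc, add_smul]]
    abel
  have h2e : ‖((2 * ε : ℝ) : 𝕜) • e‖ = 2 := by
    rw [norm_smul, RCLike.norm_ofReal, he1, mul_one]
    rcases hε with rfl | rfl <;> norm_num
  have hre : RCLike.re (inner 𝕜 (((2 * ε : ℝ) : 𝕜) • e) W : 𝕜)
      = 2 * ε * RCLike.re (inner 𝕜 e W : 𝕜) := by
    rw [inner_smul_left, RCLike.conj_ofReal, RCLike.re_ofReal_mul]
  have hsq1 : ‖(∑ k, z k)‖ ^ 2 = 4 + 4 * (ε * RCLike.re (inner 𝕜 e W : 𝕜)) + ‖W‖ ^ 2 := by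
    rw [hsz, norm_add_sq (𝕜 := 𝕜), h2e, hre]; ring
  have hsq2 : ‖(∑ k, v k)‖ ^ 2 = ‖s‖ ^ 2 + 2 * RCLike.re (inner 𝕜 s W : 𝕜) + ‖W‖ ^ 2 := by
    rw [hsumv, norm_add_sq (𝕜 := 𝕜)]
  have hmono : ‖(∑ k, z k)‖ ^ 2 ≤ ‖(∑ k, v k)‖ ^ 2 :=
    pow_le_pow_left₀ (norm_nonneg _) hFle 2
  rw [hsq1, hsq2] at hmono
  linarith

set_option maxHeartbeats 2000000 in
theorem banach_aux {𝕜 H : Type*} [RCLike 𝕜] [NormedAddCommGroup H]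
    [InnerProductSpace 𝕜 H] (n : ℕ)
    (L : ContinuousMultilinearMap 𝕜 (fun _ : Fin n => H) 𝕜)
    (hsymm : ∀ (σ : Equiv.Perm (Fin n)) (x : Fin n → H), L (x ∘ σ) = L x)
    (C : ℝ) (hC : ∀ x : H, ‖x‖ ≤ 1 → ‖L (fun _ => x)‖ ≤ C)
    (x : Fin n → H) (hx : ∀ i, ‖x i‖ ≤ 1) : ‖L x‖ ≤ C := by
  have hC0 : 0 ≤ C := le_trans (norm_nonneg _) (hC 0 (by simp))
  rcases Nat.eq_zero_or_pos n with hn | hn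
  · subst hn
    have hx0 : x = fun _ => (0 : H) := funext fun i => i.elim0
    rw [hx0]
    exact hC 0 (by simp)
  -- finite-dimensional setup
  set V := Submodule.span 𝕜 (Set.range x) with hV
  have hVfd : FiniteDimensional 𝕜 V := FiniteDimensional.span_of_finite 𝕜 (Set.finite_range x)
  set K : Set H := {h : H | h ∈ V ∧ ‖h‖ ≤ 1} with hK
  have hKcomp : IsCompact K := by
    have himg : K = Subtype.val '' (Metric.closedBall (0 : V) 1) := by
      ext h
      constructor
      · rintro ⟨hVmem, hnorm⟩
        exact ⟨⟨h, hVmem⟩, by simpa [Metric.mem_closedBall, dist_zero_right] using hnorm, rfl⟩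
      · rintro ⟨⟨h', hmem⟩, hball, rfl⟩
        exact ⟨hmem, by simpa [Metric.mem_closedBall, dist_zero_right] using hball⟩
    rw [himg]
    exact (isCompact_closedBall (0 : V) 1).image continuous_subtype_val
  have h0K : (0 : H) ∈ K := by rw [hK]; exact ⟨V.zero_mem, by simp⟩
  set KK : Set (Fin n → H) := Set.univ.pi (fun _ => K) with hKK
  have hKKcomp : IsCompact KK := isCompact_univ_pi fun _ => hKcomp
  have hKKne : KK.Nonempty := ⟨fun _ => 0, fun i _ => h0K⟩
  have hLcont : Continuous fun w : Fin n → H => ‖L w‖ := L.cont.norm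
  obtain ⟨u, huKK, humax⟩ := hKKcomp.exists_isMaxOn hKKne hLcont.continuousOn
  set m := ‖L u‖ with hm
  have hxKK : x ∈ KK := by
    rw [hKK]; intro i _
    rw [hK]; exact ⟨Submodule.subset_span ⟨i, rfl⟩, hx i⟩
  have hxm : ‖L x‖ ≤ m := humax hxKK
  rcases le_or_gt m 0 with hm0 | hmpos
  · linarith
  set A : Set (Fin n → H) := KK ∩ {w | ‖L w‖ = m} with hA
  have hAcomp : IsCompact A := hKKcomp.inter_right (isClosed_eq hLcont continuous_const)
  have hFcont : Continuous fun w : Fin n → H => ‖∑ k, w k‖ :=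
    (continuous_finset_sum Finset.univ fun i _ => continuous_apply i).norm
  obtain ⟨v, hvA, hvF⟩ := hAcomp.exists_isMaxOn ⟨u, huKK, rfl⟩ hFcont.continuousOn
  have hvKK : v ∈ KK := hvA.1
  have hvm : ‖L v‖ = m := hvA.2
  have hvK : ∀ k, v k ∈ K := by
    rw [hKK] at hvKK
    exact fun k => hvKK k (Set.mem_univ k)
  have hvnorm : ∀ k, 0 < ‖v k‖ := by
    intro k
    refine norm_pos_iff.mpr ?_
    intro h0
    rw [L.map_coord_zero k h0, norm_zero] at hvm
    exact absurd hvm.symm (ne_of_gt hmpos)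
  have hvle : ∀ k, ‖v k‖ ≤ 1 := fun k => by
    have := hvK k; rw [hK] at this; exact this.2
  have hprod : 1 ≤ ∏ k, ‖v k‖ := by
    by_contra hlt
    push_neg at hlt
    set c : Fin n → 𝕜 := fun k => ((‖v k‖⁻¹ : ℝ) : 𝕜) with hc
    have hLv' : L (fun k => c k • v k) = (∏ k, c k) • L v := L.map_smul_univ c v
    have hv'K : (fun k => c k • v k) ∈ KK := by
      rw [hKK]
      intro k _
      rw [hK]
      refine ⟨Submodule.smul_mem V _ ?_, ?_⟩
      · have := hvK k; rw [hK] at this; exact this.1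
      · rw [norm_smul, RCLike.norm_ofReal, abs_of_nonneg (inv_nonneg.mpr (norm_nonneg _)),
          inv_mul_cancel₀ (ne_of_gt (hvnorm k))]
    have hle := humax hv'K
    simp only [Set.mem_setOf_eq] at hle
    rw [hLv', norm_smul, norm_prod, hvm, ← hm] at hle
    have hcn : ∀ k, ‖c k‖ = ‖v k‖⁻¹ := fun k => by
      rw [hc]; simp [RCLike.norm_ofReal, abs_of_nonneg (inv_nonneg.mpr (norm_nonneg _))]
    rw [Finset.prod_congr rfl (fun k _ => hcn k), Finset.prod_inv_distrib] at hle
    have hppos : 0 < ∏ k, ‖v k‖ := Finset.prod_pos fun k _ => hvnorm k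
    have h2 := mul_le_mul_of_nonneg_right hle hppos.le
    rw [mul_comm _ m, mul_assoc, inv_mul_cancel₀ hppos.ne', mul_one] at h2
    nlinarith
  have hunit : ∀ k, ‖v k‖ = 1 := by
    intro k
    refine le_antisymm (hvle k) ?_
    calc (1:ℝ) ≤ ∏ l, ‖v l‖ := hprod
      _ = ‖v k‖ * ∏ l ∈ Finset.univ.erase k, ‖v l‖ :=
          (Finset.mul_prod_erase _ _ (Finset.mem_univ k)).symm
      _ ≤ ‖v k‖ * 1 := by
          refine mul_le_mul_of_nonneg_left ?_ (norm_nonneg _)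
          exact Finset.prod_le_one (fun l _ => norm_nonneg _) (fun l _ => hvle l)
      _ = ‖v k‖ := mul_one _
  have hpair : ∀ i j : Fin n, i ≠ j → v i = v j := fun i j hij =>
    banach_pair L hsymm V K hK KK hKK u m hm hmpos humax A hA v hvA hunit hvF i j hij
  have i0 : Fin n := ⟨0, hn⟩
  have hveq : v = fun _ => v i0 := by
    funext k
    rcases eq_or_ne k i0 with rfl | h
    · rfl
    · exact hpair k i0 h
  have hmC : m ≤ C := by
    rw [← hvm, hveq]
    exact hC (v i0) (hunit i0).le
  linarith

/-- Banach's theorem: in a Hilbert space, the norm of a continuous symmetric n-linear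
form equals the sup of its diagonal over the unit ball. -/
theorem banach_symmetric_multilinear_norm {𝕜 H : Type*} [RCLike 𝕜] [NormedAddCommGroup H]
    [InnerProductSpace 𝕜 H] [CompleteSpace H] (n : ℕ)
    (L : ContinuousMultilinearMap 𝕜 (fun _ : Fin n => H) 𝕜)
    (hsymm : ∀ (σ : Equiv.Perm (Fin n)) (x : Fin n → H), L (x ∘ σ) = L x) :
    ‖L‖ = sSup {y : ℝ | ∃ x : H, ‖x‖ ≤ 1 ∧ y = ‖L (fun _ => x)‖} := by
  set S := {y : ℝ | ∃ x : H, ‖x‖ ≤ 1 ∧ y = ‖L (fun _ => x)‖} with hS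
  have hbound : ∀ y ∈ S, y ≤ ‖L‖ := by
    rintro y ⟨x, hx, rfl⟩
    calc ‖L fun _ => x‖ ≤ ‖L‖ * ∏ _i : Fin n, ‖x‖ := L.le_opNorm _
      _ ≤ ‖L‖ * 1 := by
          refine mul_le_mul_of_nonneg_left ?_ (norm_nonneg L)
          exact Finset.prod_le_one (fun _ _ => norm_nonneg _) (fun _ _ => hx)
      _ = ‖L‖ := mul_one _
  have hbdd : BddAbove S := ⟨‖L‖, hbound⟩
  have hCmem : ∀ x : H, ‖x‖ ≤ 1 → ‖L (fun _ => x)‖ ≤ sSup S := fun x hx =>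
    le_csSup hbdd ⟨x, hx, rfl⟩
  refine le_antisymm ?_ (Real.sSup_le hbound (norm_nonneg L))
  have h0 : 0 ≤ sSup S := le_trans (norm_nonneg _) (hCmem 0 (by simp))
  refine ContinuousMultilinearMap.opNorm_le_bound h0 ?_
  intro y
  by_cases hzero : ∃ i, y i = 0
  · obtain ⟨i, hi⟩ := hzero
    rw [L.map_coord_zero i hi, norm_zero]
    positivity
  push_neg at hzero
  set c : Fin n → 𝕜 := fun i => ((‖y i‖ : ℝ) : 𝕜) with hc
  have hcne : ∀ i, c i ≠ 0 := fun i =>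
    RCLike.ofReal_ne_zero.mpr (norm_ne_zero_iff.mpr (hzero i))
  set y' : Fin n → H := fun i => (c i)⁻¹ • y i with hy'
  have hyy : ∀ i, y i = c i • y' i := fun i => (smul_inv_smul₀ (hcne i) (y i)).symm
  have hy'1 : ∀ i, ‖y' i‖ ≤ 1 := by
    intro i
    rw [hy']
    simp only
    rw [norm_smul, norm_inv, hc]
    simp only
    rw [RCLike.norm_ofReal, abs_of_nonneg (norm_nonneg _),
      inv_mul_cancel₀ (norm_ne_zero_iff.mpr (hzero i))]
  have hLy : L y = (∏ i, c i) • L y' := by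
    conv_lhs => rw [show y = fun i => c i • y' i from funext hyy]
    exact L.map_smul_univ c y'
  rw [hLy, norm_smul, norm_prod]
  have h1 : ∀ i : Fin n, ‖c i‖ = ‖y i‖ := by
    intro i
    rw [hc]
    simp only
    rw [RCLike.norm_ofReal, abs_of_nonneg (norm_nonneg _)]
  rw [Finset.prod_congr rfl fun i _ => h1 i]
  calc (∏ i, ‖y i‖) * ‖L y'‖ ≤ (∏ i, ‖y i‖) * sSup S := by
        refine mul_le_mul_of_nonneg_left ?_ (Finset.prod_nonneg fun _ _ => norm_nonneg _)
        exact banach_aux n L hsymm _ hCmem y' hy'1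
    _ = sSup S * ∏ i, ‖y i‖ := mul_comm _ _
end

section
/- The sequence c_n(X) of polarization constants is supermultiplicative: c_{m+n}(X) ≥ c_m(X) · c_n(X) holds for all m, n; consequently the limit lim_{n→∞} c_n(X)^{1/n} exists in [1,∞] (and equals sup_n c_n(X)^{1/n}). -/
open scoped BigOperators ENNReal

/-- `sup_{‖x‖≤1} |∏ⱼ fⱼ(x)|` for functionals `f₁,…,fₙ`. -/
noncomputable def supNormProd {𝕜 X : Type*} [RCLike 𝕜] [NormedAddCommGroup X]
    [NormedSpace 𝕜 X] {n : ℕ} (f : Fin n → (X →L[𝕜] 𝕜)) : ℝ :=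
  sSup {t : ℝ | ∃ x : X, ‖x‖ ≤ 1 ∧ t = ‖∏ j, f j x‖}

/-- The n-th linear polarization constant
`cₙ(X) = 1 / inf_{f₁,…,fₙ ∈ S_{X*}} sup_{‖x‖≤1} |∏ⱼ fⱼ(x)|`. -/
noncomputable def polarizationConst (𝕜 X : Type*) [RCLike 𝕜] [NormedAddCommGroup X]
    [NormedSpace 𝕜 X] (n : ℕ) : ℝ :=
  (sInf {y : ℝ | ∃ f : Fin n → (X →L[𝕜] 𝕜), (∀ j, ‖f j‖ = 1) ∧ y = supNormProd f})⁻¹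



section Basics
variable {𝕜 X : Type*} [RCLike 𝕜] [NormedAddCommGroup X] [NormedSpace 𝕜 X]

lemma snp_set_nonempty {n : ℕ} (f : Fin n → (X →L[𝕜] 𝕜)) :
    {t : ℝ | ∃ x : X, ‖x‖ ≤ 1 ∧ t = ‖∏ j, f j x‖}.Nonempty :=
  ⟨‖∏ j, f j (0:X)‖, ⟨0, by simp, rfl⟩⟩

lemma snp_mem_le_one {n : ℕ} {f : Fin n → (X →L[𝕜] 𝕜)} (hf : ∀ j, ‖f j‖ ≤ 1)
    {t : ℝ} (ht : t ∈ {t : ℝ | ∃ x : X, ‖x‖ ≤ 1 ∧ t = ‖∏ j, f j x‖}) : t ≤ 1 := by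
  obtain ⟨x, hx, rfl⟩ := ht
  rw [norm_prod]
  calc ∏ j, ‖f j x‖ ≤ ∏ j : Fin n, (1:ℝ) :=
        Finset.prod_le_prod (fun j _ => norm_nonneg _)
          (fun j _ => le_trans ((f j).le_opNorm x) (by
            have := hf j
            have h0 : (0:ℝ) ≤ ‖f j‖ := norm_nonneg _
            nlinarith [norm_nonneg x]))
    _ = 1 := by simp

lemma snp_bddAbove {n : ℕ} {f : Fin n → (X →L[𝕜] 𝕜)} (hf : ∀ j, ‖f j‖ ≤ 1) :
    BddAbove {t : ℝ | ∃ x : X, ‖x‖ ≤ 1 ∧ t = ‖∏ j, f j x‖} :=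
  ⟨1, fun _ ht => snp_mem_le_one hf ht⟩

lemma le_supNormProd {n : ℕ} {f : Fin n → (X →L[𝕜] 𝕜)} (hf : ∀ j, ‖f j‖ ≤ 1)
    {x : X} (hx : ‖x‖ ≤ 1) : ‖∏ j, f j x‖ ≤ supNormProd f :=
  le_csSup (snp_bddAbove hf) ⟨x, hx, rfl⟩

lemma supNormProd_nonneg {n : ℕ} {f : Fin n → (X →L[𝕜] 𝕜)} (hf : ∀ j, ‖f j‖ ≤ 1) :
    0 ≤ supNormProd f :=
  le_trans (norm_nonneg _) (le_supNormProd hf (x := 0) (by simp))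

lemma supNormProd_le_one {n : ℕ} {f : Fin n → (X →L[𝕜] 𝕜)} (hf : ∀ j, ‖f j‖ ≤ 1) :
    supNormProd f ≤ 1 :=
  csSup_le (snp_set_nonempty f) (fun _ ht => snp_mem_le_one hf ht)

end Basics
open scoped BigOperators

noncomputable def epsSeq : ℕ → ℝ
  | 0 => 1
  | (n+1) => (epsSeq n)^2 / 2^(2*n+3)

lemma epsSeq_pos : ∀ n, 0 < epsSeq n
  | 0 => one_pos
  | (n+1) => by
      have := epsSeq_pos n
      simp only [epsSeq]
      positivity

lemma epsSeq_le_one : ∀ n, epsSeq n ≤ 1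
  | 0 => le_refl 1
  | (n+1) => by
      have h1 := epsSeq_pos n
      have h2 := epsSeq_le_one n
      simp only [epsSeq]
      rw [div_le_one (by positivity)]
      have : epsSeq n ^ 2 ≤ 1 := by nlinarith
      have h3 : (1:ℝ) ≤ 2^(2*n+3) := one_le_pow₀ (by norm_num)
      linarith

section LemA
variable {𝕜 X : Type*} [RCLike 𝕜] [NormedAddCommGroup X] [NormedSpace 𝕜 X]

lemma exists_point_prod_ge : ∀ {n : ℕ} (f : Fin n → (X →L[𝕜] 𝕜)), (∀ j, ‖f j‖ = 1) →
    ∃ x : X, ‖x‖ ≤ 1 ∧ epsSeq n ≤ ∏ j, ‖f j x‖ := by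
  intro n
  induction n with
  | zero => exact fun f _ => ⟨0, by simp, by simp [epsSeq]⟩
  | succ n ih =>
    intro f hf
    set a := epsSeq n with ha
    have ha0 : 0 < a := epsSeq_pos n
    have ha1 : a ≤ 1 := epsSeq_le_one n
    obtain ⟨x, hx, hxp⟩ := ih (fun j => f j.succ) (fun j => hf j.succ)
    have hfac : ∀ (j : Fin (n+1)) (z : X), ‖z‖ ≤ 1 → ‖f j z‖ ≤ 1 := by
      intro j z hz
      calc ‖f j z‖ ≤ ‖f j‖ * ‖z‖ := (f j).le_opNorm z
        _ ≤ 1 := by rw [hf j]; simpa using hz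
    have hlow : ∀ i : Fin n, a ≤ ‖f i.succ x‖ := by
      intro i
      refine le_trans hxp ?_
      rw [← Finset.mul_prod_erase Finset.univ _ (Finset.mem_univ i)]
      have h1 : ∏ j ∈ Finset.univ.erase i, ‖f j.succ x‖ ≤ 1 :=
        Finset.prod_le_one (fun j _ => norm_nonneg _) (fun j _ => hfac j.succ x hx)
      nlinarith [norm_nonneg (f i.succ x)]
    -- a point where f 0 is large
    obtain ⟨y, hy, hfy⟩ : ∃ y : X, ‖y‖ ≤ 1 ∧ (1:ℝ)/2 ≤ ‖f 0 y‖ := by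
      obtain ⟨y, hy1, hy2⟩ := (f 0).exists_lt_apply_of_lt_opNorm (r := 1/2) (by rw [hf 0]; norm_num)
      exact ⟨y, le_of_lt hy1, le_of_lt hy2⟩
    -- choose the sign
    have key : (a/4 : ℝ) ≤ ‖f 0 x + ((a/2 : ℝ) : 𝕜) • f 0 y‖ ∨
        (a/4 : ℝ) ≤ ‖f 0 x + ((-(a/2) : ℝ) : 𝕜) • f 0 y‖ := by
      by_contra h
      push_neg at h
      obtain ⟨h1, h2⟩ := h
      have hdiff : (f 0 x + ((a/2 : ℝ) : 𝕜) • f 0 y) - (f 0 x + ((-(a/2) : ℝ) : 𝕜) • f 0 y)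
          = ((a : ℝ) : 𝕜) • f 0 y := by
        push_cast
        module
      have h3 : ‖((a : ℝ) : 𝕜) • f 0 y‖ ≤ ‖f 0 x + ((a/2 : ℝ) : 𝕜) • f 0 y‖ +
          ‖f 0 x + ((-(a/2) : ℝ) : 𝕜) • f 0 y‖ := by
        rw [← hdiff]; exact norm_sub_le _ _
      rw [norm_smul, RCLike.norm_ofReal, abs_of_pos ha0] at h3
      nlinarith
    obtain ⟨r, hr, hkey⟩ : ∃ r : ℝ, |r| = a/2 ∧ (a/4 : ℝ) ≤ ‖f 0 x + ((r : ℝ) : 𝕜) • f 0 y‖ := by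
      rcases key with h | h
      · exact ⟨a/2, by rw [abs_of_pos (by positivity)], h⟩
      · exact ⟨-(a/2), by rw [abs_neg, abs_of_pos (by positivity)], h⟩
    set z : X := x + ((r : ℝ) : 𝕜) • y with hz
    have hzn : ‖z‖ ≤ 3/2 := by
      calc ‖z‖ ≤ ‖x‖ + ‖((r : ℝ) : 𝕜) • y‖ := norm_add_le _ _
        _ ≤ 1 + a/2 * 1 := by
            rw [norm_smul, RCLike.norm_ofReal, hr]
            exact add_le_add hx (by nlinarith [norm_nonneg y, hy])
        _ ≤ 3/2 := by nlinarith
    -- bounds at z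
    have hz0 : (a/4 : ℝ) ≤ ‖f 0 z‖ := by
      rw [hz]
      rw [map_add, map_smul]
      exact hkey
    have hztail : ∀ j : Fin n, (1/2 : ℝ) * ‖f j.succ x‖ ≤ ‖f j.succ z‖ := by
      intro j
      have e1 : f j.succ z = f j.succ x + ((r : ℝ) : 𝕜) • f j.succ y := by
        rw [hz, map_add, map_smul]
      have e2 : ‖((r : ℝ) : 𝕜) • f j.succ y‖ ≤ a/2 := by
        rw [norm_smul, RCLike.norm_ofReal, hr]
        nlinarith [norm_nonneg (f j.succ y), hfac j.succ y hy]
      have e3 : ‖f j.succ x‖ - a/2 ≤ ‖f j.succ z‖ := by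
        have := norm_add_le (f j.succ z) (-(((r : ℝ) : 𝕜) • f j.succ y))
        rw [e1] at this ⊢
        simp only [add_neg_cancel_right, norm_neg] at this
        linarith
      have := hlow j
      linarith
    -- final point
    set w : X := ((2⁻¹ : ℝ) : 𝕜) • z with hw
    refine ⟨w, ?_, ?_⟩
    · rw [hw, norm_smul, RCLike.norm_ofReal]
      rw [abs_of_pos (by norm_num)]
      nlinarith
    · have hprod : ∏ j, ‖f j w‖ = (2⁻¹ : ℝ)^(n+1) * ∏ j, ‖f j z‖ := by
        have : ∀ j : Fin (n+1), ‖f j w‖ = (2⁻¹ : ℝ) * ‖f j z‖ := by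
          intro j
          rw [hw, map_smul, norm_smul, RCLike.norm_ofReal, abs_of_pos (by norm_num)]
        rw [Finset.prod_congr rfl (fun j _ => this j), Finset.prod_mul_distrib]
        simp
      rw [hprod, Fin.prod_univ_succ]
      have htail : (2⁻¹ : ℝ)^n * a ≤ ∏ j : Fin n, ‖f j.succ z‖ := by
        calc (2⁻¹ : ℝ)^n * a ≤ (2⁻¹:ℝ)^n * ∏ j : Fin n, ‖f j.succ x‖ := by
              have h0 : (0:ℝ) ≤ (2⁻¹:ℝ)^n := by positivity
              nlinarith [hxp]
          _ = ∏ j : Fin n, ((1/2 : ℝ) * ‖f j.succ x‖) := by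
              rw [Finset.prod_mul_distrib]
              simp [one_div]
          _ ≤ ∏ j : Fin n, ‖f j.succ z‖ :=
              Finset.prod_le_prod (fun j _ => by positivity) (fun j _ => hztail j)
      have hmul : (a/4) * ((2⁻¹:ℝ)^n * a) ≤ ‖f 0 z‖ * ∏ j : Fin n, ‖f j.succ z‖ := by
        apply mul_le_mul hz0 htail (by positivity) (norm_nonneg _)
      calc epsSeq (n+1) = (2⁻¹:ℝ)^(n+1) * ((a/4) * ((2⁻¹:ℝ)^n * a)) := by
            simp only [epsSeq, ← ha]
            rw [inv_pow, inv_pow]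
            field_simp
            ring
        _ ≤ (2⁻¹:ℝ)^(n+1) * (‖f 0 z‖ * ∏ j : Fin n, ‖f j.succ z‖) := by
            have h0 : (0:ℝ) ≤ (2⁻¹:ℝ)^(n+1) := by positivity
            nlinarith [hmul]
        _ = _ := rfl

end LemA

section Inf
variable {𝕜 X : Type*} [RCLike 𝕜] [NormedAddCommGroup X] [NormedSpace 𝕜 X]

/-- The set whose infimum appears in `polarizationConst`. -/
def polE (𝕜 X : Type*) [RCLike 𝕜] [NormedAddCommGroup X] [NormedSpace 𝕜 X] (n : ℕ) : Set ℝ :=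
  {y : ℝ | ∃ f : Fin n → (X →L[𝕜] 𝕜), (∀ j, ‖f j‖ = 1) ∧ y = supNormProd f}

lemma polarizationConst_eq (n : ℕ) : polarizationConst 𝕜 X n = (sInf (polE 𝕜 X n))⁻¹ := rfl

lemma eps_le_snp {n : ℕ} {f : Fin n → (X →L[𝕜] 𝕜)} (hf : ∀ j, ‖f j‖ = 1) :
    epsSeq n ≤ supNormProd f := by
  obtain ⟨x, hx, hp⟩ := exists_point_prod_ge f hf
  calc epsSeq n ≤ ∏ j, ‖f j x‖ := hp
    _ = ‖∏ j, f j x‖ := (norm_prod _ _).symm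
    _ ≤ supNormProd f := le_supNormProd (fun j => (hf j).le) hx

lemma snp_pos {n : ℕ} {f : Fin n → (X →L[𝕜] 𝕜)} (hf : ∀ j, ‖f j‖ = 1) :
    0 < supNormProd f := lt_of_lt_of_le (epsSeq_pos n) (eps_le_snp hf)

lemma polE_nonempty [Nontrivial X] (n : ℕ) : (polE 𝕜 X n).Nonempty := by
  obtain ⟨x, hx⟩ := exists_ne (0 : X)
  obtain ⟨g, hg, -⟩ := exists_dual_vector 𝕜 x (norm_ne_zero_iff.2 hx)
  exact ⟨supNormProd (fun _ : Fin n => g), fun _ => g, fun _ => hg, rfl⟩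

lemma polE_bddBelow (n : ℕ) : BddBelow (polE 𝕜 X n) := by
  refine ⟨0, ?_⟩
  rintro y ⟨f, hf, rfl⟩
  exact supNormProd_nonneg (fun j => (hf j).le)

lemma eps_le_sInf [Nontrivial X] (n : ℕ) : epsSeq n ≤ sInf (polE 𝕜 X n) := by
  refine le_csInf (polE_nonempty n) ?_
  rintro y ⟨f, hf, rfl⟩
  exact eps_le_snp hf

lemma sInf_polE_pos [Nontrivial X] (n : ℕ) : 0 < sInf (polE 𝕜 X n) :=
  lt_of_lt_of_le (epsSeq_pos n) (eps_le_sInf n)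

lemma sInf_polE_le_one [Nontrivial X] (n : ℕ) : sInf (polE 𝕜 X n) ≤ 1 := by
  obtain ⟨y, hy⟩ := polE_nonempty (𝕜 := 𝕜) (X := X) n
  obtain ⟨f, hf, rfl⟩ := hy
  exact csInf_le_of_le (polE_bddBelow n) ⟨f, hf, rfl⟩ (supNormProd_le_one (fun j => (hf j).le))

lemma append_unit {m n : ℕ} {f : Fin m → (X →L[𝕜] 𝕜)} {g : Fin n → (X →L[𝕜] 𝕜)}
    (hf : ∀ j, ‖f j‖ = 1) (hg : ∀ j, ‖g j‖ = 1) : ∀ j, ‖Fin.append f g j‖ = 1 := by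
  intro j
  refine Fin.addCases (fun i => ?_) (fun i => ?_) j
  · rw [Fin.append_left]; exact hf i
  · rw [Fin.append_right]; exact hg i

lemma snp_append_le {m n : ℕ} {f : Fin m → (X →L[𝕜] 𝕜)} {g : Fin n → (X →L[𝕜] 𝕜)}
    (hf : ∀ j, ‖f j‖ ≤ 1) (hg : ∀ j, ‖g j‖ ≤ 1) :
    supNormProd (Fin.append f g) ≤ supNormProd f * supNormProd g := by
  refine csSup_le (snp_set_nonempty _) ?_
  rintro t ⟨x, hx, rfl⟩
  have he : ‖∏ j : Fin (m+n), Fin.append f g j x‖ = ‖∏ j, f j x‖ * ‖∏ j, g j x‖ := by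
    rw [← norm_mul, Fin.prod_univ_add]
    simp only [Fin.append_left, Fin.append_right]
  rw [he]
  exact mul_le_mul (le_supNormProd hf hx) (le_supNormProd hg hx) (norm_nonneg _)
    (supNormProd_nonneg hf)

lemma sInf_polE_supermul [Nontrivial X] (m n : ℕ) :
    sInf (polE 𝕜 X (m+n)) ≤ sInf (polE 𝕜 X m) * sInf (polE 𝕜 X n) := by
  have hIm : 0 < sInf (polE 𝕜 X m) := sInf_polE_pos m
  have stepA : ∀ (g : Fin n → (X →L[𝕜] 𝕜)), (∀ j, ‖g j‖ = 1) →
      sInf (polE 𝕜 X (m+n)) ≤ sInf (polE 𝕜 X m) * supNormProd g := by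
    intro g hg
    have hSg : 0 < supNormProd g := snp_pos hg
    rw [← div_le_iff₀ hSg]
    refine le_csInf (polE_nonempty m) ?_
    rintro y ⟨f, hf, rfl⟩
    rw [div_le_iff₀ hSg]
    refine csInf_le_of_le (polE_bddBelow _) ⟨Fin.append f g, append_unit hf hg, rfl⟩ ?_
    exact snp_append_le (fun j => (hf j).le) (fun j => (hg j).le)
  rw [← div_le_iff₀' hIm]
  refine le_csInf (polE_nonempty n) ?_
  rintro y ⟨g, hg, rfl⟩
  rw [div_le_iff₀' hIm]
  exact stepA g hg

lemma one_le_pc [Nontrivial X] (n : ℕ) : 1 ≤ polarizationConst 𝕜 X n := by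
  rw [polarizationConst_eq]
  exact (one_le_inv₀ (sInf_polE_pos n)).2 (sInf_polE_le_one n)

lemma pc_supermul [Nontrivial X] (m n : ℕ) :
    polarizationConst 𝕜 X m * polarizationConst 𝕜 X n ≤ polarizationConst 𝕜 X (m + n) := by
  rw [polarizationConst_eq, polarizationConst_eq, polarizationConst_eq, ← mul_inv]
  exact inv_anti₀ (sInf_polE_pos (m+n)) (sInf_polE_supermul m n)

end Inf

section Fekete
open Filter


lemma ennreal_fekete (A : ℕ → ℝ≥0∞) (h1 : ∀ n, 1 ≤ A n) (hfin : ∀ n, A n ≠ ⊤)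
    (hsm : ∀ m n, A m * A n ≤ A (m + n)) :
    Filter.Tendsto (fun n : ℕ => A (n+1) ^ (1/((n:ℝ)+1))) Filter.atTop
      (nhds (⨆ n : ℕ, A (n+1) ^ (1/((n:ℝ)+1)))) := by
  set F : ℕ → ℝ≥0∞ := fun n => A (n+1) ^ (1/((n:ℝ)+1)) with hF
  set L : ℝ≥0∞ := ⨆ n : ℕ, F n with hL
  have hpow : ∀ k q r : ℕ, (A k)^q * A r ≤ A (q*k + r) := by
    intro k q
    induction q with
    | zero => intro r; simpa using le_refl (A r)
    | succ q ihq =>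
      intro r
      have he : (A k)^(q+1) * A r = A k * ((A k)^q * A r) := by ring
      rw [he]
      calc A k * ((A k)^q * A r) ≤ A k * A (q*k + r) := mul_le_mul_right (ihq r) _
        _ ≤ A (k + (q*k+r)) := hsm _ _
        _ = A ((q+1)*k + r) := by ring_nf
  have key : ∀ k n : ℕ, (A k) ^ (n / k) ≤ A n := by
    intro k n
    calc (A k)^(n/k) = (A k)^(n/k) * 1 := (mul_one _).symm
      _ ≤ (A k)^(n/k) * A (n % k) := mul_le_mul_right (h1 _) _
      _ ≤ A ((n/k) * k + n % k) := hpow k (n/k) (n%k)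
      _ = A n := by rw [mul_comm, Nat.div_add_mod]
  -- limsup ≤ L
  have hls : limsup F atTop ≤ L := limsup_le_of_le (h := Eventually.of_forall (le_iSup F))
  -- each F k ≤ liminf F
  have hlif : ∀ k, F k ≤ liminf F atTop := by
    intro k
    set B : ℝ≥0∞ := A (k+1) with hB
    have hB1 : 1 ≤ B := h1 (k+1)
    have hBt : B ≠ ⊤ := hfin (k+1)
    set b : ℝ := B.toReal with hb
    have hb0 : 0 < b := ENNReal.toReal_pos (by intro h; rw [h] at hB1; simp at hB1) hBt
    have hBb : B = ENNReal.ofReal b := (ENNReal.ofReal_toReal hBt).symm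
    set e : ℕ → ℝ := fun n => (((n+1) / (k+1) : ℕ) : ℝ) / ((n:ℝ)+1) with he
    -- pointwise bound
    have hBF : ∀ n, B ^ (e n) ≤ F n := by
      intro n
      have h2 : (B ^ ((n+1)/(k+1) : ℕ)) ^ (1/((n:ℝ)+1)) ≤ F n :=
        ENNReal.rpow_le_rpow (key (k+1) (n+1)) (by positivity)
      have h3 : B ^ (e n) = (B ^ ((n+1)/(k+1) : ℕ)) ^ (1/((n:ℝ)+1)) := by
        rw [← ENNReal.rpow_natCast B, ← ENNReal.rpow_mul]
        congr 1
        simp only [he]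
        rw [div_eq_mul_one_div]
      rw [h3]; exact h2
    -- e tendsto 1/(k+1)
    have het : Tendsto e atTop (nhds (1/((k:ℝ)+1))) := by
      have hk0 : (0:ℝ) < (k:ℝ)+1 := by positivity
      have hlow : ∀ n : ℕ, 1/((k:ℝ)+1) - 1/((n:ℝ)+1) ≤ e n := by
        intro n
        have hn0 : (0:ℝ) < (n:ℝ)+1 := by positivity
        have hmod : ((n+1) % (k+1) : ℕ) < k+1 := Nat.mod_lt _ (Nat.succ_pos k)
        have hdm : ((k:ℝ)+1) * (((n+1)/(k+1) : ℕ) : ℝ) + (((n+1) % (k+1) : ℕ) : ℝ)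
            = (n:ℝ)+1 := by
          have := Nat.div_add_mod (n+1) (k+1)
          exact_mod_cast congrArg (fun m : ℕ => (m:ℝ)) this
        have hmr : (((n+1) % (k+1) : ℕ) : ℝ) < (k:ℝ)+1 := by exact_mod_cast hmod
        rw [he]
        rw [div_sub_div _ _ (ne_of_gt hk0) (ne_of_gt hn0), div_le_div_iff₀ (by positivity) hn0]
        nlinarith [hdm, hmr]
      have hup : ∀ n : ℕ, e n ≤ 1/((k:ℝ)+1) := by
        intro n
        have hn0 : (0:ℝ) < (n:ℝ)+1 := by positivity
        have hdm : (((n+1)/(k+1) : ℕ) : ℝ) * ((k:ℝ)+1) ≤ (n:ℝ)+1 := by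
          have := Nat.div_mul_le_self (n+1) (k+1)
          exact_mod_cast this
        rw [he, div_le_div_iff₀ hn0 hk0]
        nlinarith
      have htl : Tendsto (fun n : ℕ => 1/((k:ℝ)+1) - 1/((n:ℝ)+1)) atTop
          (nhds (1/((k:ℝ)+1))) := by
        have := tendsto_one_div_add_atTop_nhds_zero_nat (𝕜 := ℝ)
        simpa using (tendsto_const_nhds (x := 1/((k:ℝ)+1))).sub this
      exact tendsto_of_tendsto_of_tendsto_of_le_of_le htl tendsto_const_nhds hlow hup
    -- B ^ e n tendsto B ^ (1/(k+1)) = F k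
    have hcont : Tendsto (fun n => B ^ (e n)) atTop (nhds (B ^ (1/((k:ℝ)+1)))) := by
      have hreal : Tendsto (fun n => b ^ (e n)) atTop (nhds (b ^ (1/((k:ℝ)+1)))) :=
        ((Real.continuousAt_const_rpow (ne_of_gt hb0)).tendsto).comp het
      have : Tendsto (fun n => ENNReal.ofReal (b ^ (e n))) atTop
          (nhds (ENNReal.ofReal (b ^ (1/((k:ℝ)+1))))) :=
        (ENNReal.continuous_ofReal.tendsto _).comp hreal
      simpa [hBb, ENNReal.ofReal_rpow_of_pos hb0] using this
    have hFk : B ^ (1/((k:ℝ)+1)) = F k := rfl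
    calc F k = liminf (fun n => B ^ (e n)) atTop := by
          rw [← hFk]; exact (hcont.liminf_eq).symm
      _ ≤ liminf F atTop := liminf_le_liminf (Eventually.of_forall hBF)
  have hLli : L ≤ liminf F atTop := iSup_le hlif
  have h1' : liminf F atTop = L :=
    le_antisymm (le_trans (liminf_le_limsup) hls) hLli
  have h2' : limsup F atTop = L :=
    le_antisymm hls (le_trans hLli liminf_le_limsup)
  exact tendsto_of_liminf_eq_limsup h1' h2'

end Fekete

/-- Supermultiplicativity `c_{m+n}(X) ≥ c_m(X)·c_n(X)`, and consequently
`lim_{n→∞} cₙ(X)^{1/n}` exists in `[1,∞]` and equals `sup_n cₙ(X)^{1/n}`. -/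
theorem polarizationConst_supermultiplicative_and_limit (𝕜 X : Type*) [RCLike 𝕜]
    [NormedAddCommGroup X] [NormedSpace 𝕜 X] [Nontrivial X] :
    (∀ m n : ℕ, polarizationConst 𝕜 X m * polarizationConst 𝕜 X n ≤
        polarizationConst 𝕜 X (m + n)) ∧
      (⨆ n : ℕ, ENNReal.ofReal (polarizationConst 𝕜 X (n + 1) ^ (1 / ((n : ℝ) + 1)))) ∈
        Set.Ici (1 : ℝ≥0∞) ∧
      Filter.Tendsto
        (fun n : ℕ => ENNReal.ofReal (polarizationConst 𝕜 X (n + 1) ^ (1 / ((n : ℝ) + 1))))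
        Filter.atTop
        (nhds (⨆ n : ℕ, ENNReal.ofReal (polarizationConst 𝕜 X (n + 1) ^ (1 / ((n : ℝ) + 1))))) := by
  have hsm : ∀ m n : ℕ, polarizationConst 𝕜 X m * polarizationConst 𝕜 X n ≤
      polarizationConst 𝕜 X (m + n) := fun m n => pc_supermul m n
  have h1A : ∀ n, (1:ℝ≥0∞) ≤ ENNReal.ofReal (polarizationConst 𝕜 X n) :=
    fun n => ENNReal.one_le_ofReal.2 (one_le_pc n)
  have hfinA : ∀ n, ENNReal.ofReal (polarizationConst 𝕜 X n) ≠ ⊤ :=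
    fun n => ENNReal.ofReal_ne_top
  have hsmA : ∀ m n, ENNReal.ofReal (polarizationConst 𝕜 X m) *
      ENNReal.ofReal (polarizationConst 𝕜 X n) ≤ ENNReal.ofReal (polarizationConst 𝕜 X (m+n)) := by
    intro m n
    rw [← ENNReal.ofReal_mul (le_trans zero_le_one (one_le_pc m))]
    exact ENNReal.ofReal_le_ofReal (hsm m n)
  have hrw : (fun n : ℕ => ENNReal.ofReal (polarizationConst 𝕜 X (n + 1) ^ (1 / ((n : ℝ) + 1))))
      = fun n : ℕ => (ENNReal.ofReal (polarizationConst 𝕜 X (n+1))) ^ (1 / ((n:ℝ) + 1)) := by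
    funext n
    exact (ENNReal.ofReal_rpow_of_pos (lt_of_lt_of_le one_pos (one_le_pc (n+1)))).symm
  refine ⟨hsm, ?_, ?_⟩
  · rw [Set.mem_Ici]
    refine le_trans ?_
      (le_iSup (fun n : ℕ => ENNReal.ofReal (polarizationConst 𝕜 X (n + 1) ^ (1 / ((n : ℝ) + 1)))) 0)
    rw [ENNReal.one_le_ofReal]
    exact Real.one_le_rpow (one_le_pc 1) (by norm_num)
  · rw [hrw]
    exact ennreal_fekete (fun n => ENNReal.ofReal (polarizationConst 𝕜 X n)) h1A hfinA hsmA
end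

section
/- For the 2-dimensional real Euclidean space, c_n(ℝ²) = 2^{n-1} for every n ≥ 1; equivalently, the n-th metric Chebyshev constant of the unit circle S¹ satisfies M_n(S¹) = 2, i.e., for any points y₁,...,yₙ ∈ S¹ there exists y ∈ S¹ with ∏_{j=1}^n ‖y − y_j‖ ≥ 2, and 2 is optimal. -/
open scoped BigOperators

open Polynomial Finset Complex

-- L1: lower bound on circle
lemma circle_lower (n : ℕ) (hn : 1 ≤ n) (y : Fin n → ℂ) (hy : ∀ j, ‖y j‖ = 1) :
    ∃ x : ℂ, ‖x‖ = 1 ∧ 2 ≤ ∏ j, ‖x - y j‖ := by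
  classical
  have hn0 : (n : ℕ) ≠ 0 := by omega
  set c : ℂ := ∏ j, (0 - y j) with hc
  have hcabs : ‖c‖ = 1 := by
    rw [hc]
    rw [norm_prod]
    simp [hy]
  have hcne : c ≠ 0 := by
    intro h; rw [h] at hcabs; simp at hcabs
  -- α with α^n = c, |α| = 1
  set α : ℂ := Complex.exp (Complex.log c / n) with hα
  have hαn : α ^ n = c := by
    rw [hα, ← Complex.exp_nat_mul]
    rw [mul_div_cancel₀ _ (by exact_mod_cast hn0 : (n:ℂ) ≠ 0)]
    exact Complex.exp_log hcne
  have hαabs : ‖α‖ = 1 := by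
    rw [hα, Complex.norm_exp]
    have : (Complex.log c / n).re = 0 := by
      simp [Complex.div_re, Complex.log_re, hcabs]
    rw [this, Real.exp_zero]
  set ζ : ℂ := Complex.exp (2 * Real.pi * Complex.I / n) with hζ
  have hprim : IsPrimitiveRoot ζ n := Complex.isPrimitiveRoot_exp n hn0
  have hζabs : ‖ζ‖ = 1 := by
    rw [hζ, Complex.norm_exp]
    simp [Complex.div_re]
  -- polynomial
  set P : ℂ[X] := ∏ j, (X - C (y j)) with hP
  have hmonic : P.Monic := monic_prod_of_monic _ _ (fun j _ => monic_X_sub_C _)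
  have hdeg : P.natDegree = n := by
    rw [hP, natDegree_prod_of_monic _ _ (fun j _ => monic_X_sub_C _)]
    simp
  have hcoeff0 : P.coeff 0 = c := by
    rw [coeff_zero_eq_eval_zero, hP, eval_prod, hc]
    simp
  have hcoeffn : P.coeff n = 1 := by
    have := hmonic.coeff_natDegree
    rwa [hdeg] at this
  have hgeom : ∀ k : ℕ, (∑ m ∈ range n, (ζ ^ k) ^ m) = if (n : ℕ) ∣ k then (n : ℂ) else 0 := by
    intro k
    by_cases hdvd : (n : ℕ) ∣ k
    · rw [if_pos hdvd]
      have : ζ ^ k = 1 := (hprim.pow_eq_one_iff_dvd k).2 hdvd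
      simp [this]
    · rw [if_neg hdvd]
      have hne1 : ζ ^ k ≠ 1 := fun h => hdvd ((hprim.pow_eq_one_iff_dvd k).1 h)
      rw [geom_sum_eq hne1]
      have : (ζ ^ k) ^ n = 1 := by
        rw [← pow_mul, mul_comm, pow_mul, hprim.pow_eq_one, one_pow]
      rw [this]; simp
  have hsum : (∑ m ∈ range n, P.eval (α * ζ ^ m)) = 2 * n * c := by
    have heval : ∀ m, P.eval (α * ζ ^ m) =
        ∑ k ∈ range (n + 1), P.coeff k * (α * ζ ^ m) ^ k := by
      intro m
      rw [eval_eq_sum_range, hdeg]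
    simp_rw [heval]
    rw [Finset.sum_comm]
    have : ∀ k ∈ range (n + 1), (∑ m ∈ range n, P.coeff k * (α * ζ ^ m) ^ k)
        = P.coeff k * α ^ k * (if (n : ℕ) ∣ k then (n : ℂ) else 0) := by
      intro k _
      rw [← hgeom k, Finset.mul_sum]
      congr 1; ext m
      rw [mul_pow, ← pow_mul, mul_comm m k, pow_mul]
      ring
    rw [Finset.sum_congr rfl this]
    have h2 : ∀ k ∈ range (n + 1), (P.coeff k * α ^ k * if (n:ℕ) ∣ k then (n : ℂ) else 0)
        = (if k = 0 then (n : ℂ) * c else 0) + (if k = n then (n : ℂ) * c else 0) := by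
      intro k hk
      rcases eq_or_ne k 0 with rfl | hk0
      · simp [hcoeff0, if_neg (by omega : (0:ℕ) ≠ n), mul_comm]
      · rcases eq_or_ne k n with rfl | hkn
        · simp [hcoeffn, hαn, if_neg hk0, mul_comm]
        · have : ¬ (n:ℕ) ∣ k := by
            rw [Finset.mem_range] at hk
            intro hd
            rcases hd with ⟨t, rfl⟩
            rcases t with _ | _ | t
            · simp at hk0
            · simp at hkn
            · nlinarith
          simp [this, hk0, hkn]
    rw [Finset.sum_congr rfl h2, Finset.sum_add_distrib, Finset.sum_ite_eq' (range (n+1)),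
      Finset.sum_ite_eq' (range (n+1))]
    simp only [Finset.mem_range]
    rw [if_pos (by omega), if_pos (by omega)]
    ring
  -- now extract the point
  have habs : (2 : ℝ) * n ≤ ∑ m ∈ range n, ‖P.eval (α * ζ ^ m)‖ := by
    calc (2 : ℝ) * n = ‖(2 * n * c : ℂ)‖ := by
          rw [norm_mul, norm_mul, hcabs]
          norm_num
      _ = ‖∑ m ∈ range n, P.eval (α * ζ ^ m)‖ := by rw [hsum]
      _ ≤ ∑ m ∈ range n, ‖P.eval (α * ζ ^ m)‖ := norm_sum_le _ _
  have : ∃ m ∈ range n, (2:ℝ) ≤ ‖P.eval (α * ζ ^ m)‖ := by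
    by_contra hcon
    push_neg at hcon
    have : ∑ m ∈ range n, ‖P.eval (α * ζ ^ m)‖ < ∑ m ∈ range n, (2:ℝ) := by
      apply Finset.sum_lt_sum_of_nonempty
      · exact Finset.nonempty_range_iff.2 hn0
      · exact hcon
    simp only [Finset.sum_const, Finset.card_range, nsmul_eq_mul] at this
    nlinarith
  obtain ⟨m, _, hm⟩ := this
  refine ⟨α * ζ ^ m, ?_, ?_⟩
  · rw [norm_mul, norm_pow, hαabs, hζabs]; simp
  · calc (2:ℝ) ≤ ‖P.eval (α * ζ ^ m)‖ := hm
      _ = ∏ j, ‖α * ζ ^ m - y j‖ := by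
          rw [hP, eval_prod, norm_prod]
          simp

lemma prod_X_sub_pow_zeta (n : ℕ) (hn : 1 ≤ n) {ζ : ℂ} (hprim : IsPrimitiveRoot ζ n) :
    ∀ x : ℂ, (∏ j : Fin n, (x - ζ ^ (j : ℕ))) = x ^ n - 1 := by
  classical
  intro x
  have hid : (X : ℂ[X]) ^ n - 1 = ∏ j ∈ Finset.range n, (X - C (ζ ^ j)) := by
    rw [X_pow_sub_one_eq_prod (by omega) hprim]
    refine (Finset.prod_bij (fun j _ => ζ ^ j) ?_ ?_ ?_ ?_).symm
    · intro j hj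
      rw [Polynomial.mem_nthRootsFinset (by omega)]
      rw [← pow_mul, mul_comm, pow_mul, hprim.pow_eq_one, one_pow]
    · intro a ha b hb hab
      exact hprim.injOn_pow (by simpa using ha) (by simpa using hb) hab
    · intro ξ hξ
      haveI : NeZero n := ⟨by omega⟩
      obtain ⟨i, hik, rfl⟩ := hprim.eq_pow_of_pow_eq_one
        ((Polynomial.mem_nthRootsFinset (n := n) (by omega) 1).1 hξ)
      exact ⟨i, Finset.mem_range.2 hik, rfl⟩
    · intro j hj; rfl
  have := congrArg (Polynomial.eval x) hid
  simp only [eval_sub, eval_pow, eval_X, eval_one, eval_prod, eval_C] at this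
  rw [this, Fin.prod_univ_eq_prod_range (fun j => x - ζ ^ j)]

noncomputable def cE : ℂ ≃ₗᵢ[ℝ] EuclideanSpace ℝ (Fin 2) :=
  Complex.orthonormalBasisOneI.repr

lemma cE_norm (z : ℂ) : ‖cE z‖ = ‖z‖ := cE.norm_map z

lemma cE_symm_norm (x : EuclideanSpace ℝ (Fin 2)) : ‖cE.symm x‖ = ‖x‖ := cE.symm.norm_map x

lemma cE_sub_norm (z : ℂ) (x : EuclideanSpace ℝ (Fin 2)) : ‖cE z - x‖ = ‖z - cE.symm x‖ := by
  rw [← cE.norm_map (z - cE.symm x), map_sub]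
  simp

-- Part 2 in Euclidean space
lemma euclid_lower (n : ℕ) (hn : 1 ≤ n) (y : Fin n → EuclideanSpace ℝ (Fin 2))
    (hy : ∀ j, ‖y j‖ = 1) :
    ∃ x : EuclideanSpace ℝ (Fin 2), ‖x‖ = 1 ∧ (2 : ℝ) ≤ ∏ j, ‖x - y j‖ := by
  obtain ⟨x, hx1, hx2⟩ := circle_lower n hn (fun j => cE.symm (y j))
    (fun j => by rw [cE_symm_norm, hy j])
  refine ⟨cE x, by rw [cE_norm, hx1], ?_⟩
  calc (2:ℝ) ≤ ∏ j, ‖x - cE.symm (y j)‖ := hx2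
    _ = ∏ j, ‖cE x - y j‖ := by
        congr 1; ext j; rw [cE_sub_norm]

-- optimal config in ℂ
lemma circle_opt (n : ℕ) (hn : 1 ≤ n) :
    ∃ y : Fin n → ℂ, (∀ j, ‖y j‖ = 1) ∧ (∀ x : ℂ, ‖x‖ = 1 → ∏ j, ‖x - y j‖ ≤ 2)
      ∧ ∃ x : ℂ, ‖x‖ = 1 ∧ ∏ j, ‖x - y j‖ = 2 := by
  have hn0 : n ≠ 0 := by omega
  set ζ : ℂ := Complex.exp (2 * Real.pi * Complex.I / n) with hζ
  have hprim : IsPrimitiveRoot ζ n := Complex.isPrimitiveRoot_exp n hn0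
  have hζabs : ‖ζ‖ = 1 := by
    rw [hζ, Complex.norm_exp]
    simp [Complex.div_re]
  have key : ∀ x : ℂ, (∏ j : Fin n, ‖x - ζ ^ (j:ℕ)‖) = ‖x ^ n - 1‖ := by
    intro x
    rw [← norm_prod, prod_X_sub_pow_zeta n hn hprim x]
  refine ⟨fun j => ζ ^ (j : ℕ), fun j => by rw [norm_pow, hζabs, one_pow], ?_, ?_⟩
  · intro x hx
    rw [key x]
    calc ‖x ^ n - 1‖ ≤ ‖x ^ n‖ + ‖(1:ℂ)‖ := norm_sub_le _ _
      _ = 2 := by rw [norm_pow, hx, one_pow, norm_one]; norm_num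
  · refine ⟨Complex.exp (Real.pi * Complex.I / n), ?_, ?_⟩
    · rw [Complex.norm_exp]
      simp [Complex.div_re]
    · rw [key, ← Complex.exp_nat_mul]
      rw [mul_div_cancel₀ _ (by exact_mod_cast hn0 : (n:ℂ) ≠ 0)]
      rw [Complex.exp_pi_mul_I]
      norm_num

lemma cE_sub_norm' (x : EuclideanSpace ℝ (Fin 2)) (z : ℂ) : ‖x - cE z‖ = ‖cE.symm x - z‖ := by
  rw [← cE.symm.norm_map (x - cE z), map_sub]
  simp

lemma euclid_cheby (n : ℕ) (hn : 1 ≤ n) :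
    sInf {s : ℝ | ∃ y : Fin n → EuclideanSpace ℝ (Fin 2), (∀ j, ‖y j‖ = 1) ∧
          s = sSup {t : ℝ | ∃ x : EuclideanSpace ℝ (Fin 2), ‖x‖ = 1 ∧
            t = ∏ j, ‖x - y j‖}} = 2 := by
  have hbdd : ∀ (y : Fin n → EuclideanSpace ℝ (Fin 2)), (∀ j, ‖y j‖ = 1) →
      ∀ t ∈ {t : ℝ | ∃ x : EuclideanSpace ℝ (Fin 2), ‖x‖ = 1 ∧
        t = ∏ j, ‖x - y j‖}, t ≤ 2 ^ n := by
    intro y hy t ht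
    obtain ⟨x, hx, rfl⟩ := ht
    calc ∏ j, ‖x - y j‖ ≤ ∏ _j : Fin n, (2:ℝ) := by
          apply Finset.prod_le_prod
          · intro j _; positivity
          · intro j _
            calc ‖x - y j‖ ≤ ‖x‖ + ‖y j‖ := norm_sub_le _ _
              _ = 2 := by rw [hx, hy j]; norm_num
      _ = 2 ^ n := by simp
  apply le_antisymm
  · -- 2 is in the set
    obtain ⟨yC, hyC, hub, x₀, hx₀, hx₀2⟩ := circle_opt n hn
    apply csInf_le
    · refine ⟨2, ?_⟩
      rintro s ⟨y, hy, rfl⟩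
      obtain ⟨x, hx1, hx2⟩ := euclid_lower n hn y hy
      exact le_trans hx2 (le_csSup ⟨2^n, hbdd y hy⟩ ⟨x, hx1, rfl⟩)
    · refine ⟨fun j => cE (yC j), fun j => by rw [cE_norm, hyC j], ?_⟩
      symm
      apply IsGreatest.csSup_eq
      constructor
      · refine ⟨cE x₀, by rw [cE_norm, hx₀], ?_⟩
        rw [← hx₀2]
        refine Finset.prod_congr rfl fun j _ => ?_
        rw [cE_sub_norm]
        simp
      · rintro t ⟨x, hx, rfl⟩
        have : ∏ j, ‖x - cE (yC j)‖ = ∏ j, ‖cE.symm x - yC j‖ := by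
          congr 1; ext j; rw [cE_sub_norm']
        rw [this]
        exact hub (cE.symm x) (by rw [cE_symm_norm, hx])
  · -- 2 is a lower bound
    apply le_csInf
    · obtain ⟨yC, hyC, hub, x₀, hx₀, hx₀2⟩ := circle_opt n hn
      exact ⟨_, ⟨fun j => cE (yC j), fun j => by rw [cE_norm, hyC j], rfl⟩⟩
    · rintro s ⟨y, hy, rfl⟩
      obtain ⟨x, hx1, hx2⟩ := euclid_lower n hn y hy
      exact le_trans hx2 (le_csSup ⟨2^n, hbdd y hy⟩ ⟨x, hx1, rfl⟩)

-- functional representation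
lemma func_rep (f : ℂ →L[ℝ] ℝ) (hf : ‖f‖ = 1) :
    ∃ u : ℂ, ‖u‖ = 1 ∧ ∀ x, f x = ((starRingEnd ℂ) u * x).re := by
  set u : ℂ := Complex.mk (f 1) (f Complex.I) with hu
  have hfx : ∀ x : ℂ, f x = ((starRingEnd ℂ) u * x).re := by
    intro x
    have hx : x = x.re • (1 : ℂ) + x.im • Complex.I := by
      simp [Complex.ext_iff]
    rw [hx, map_add, map_smul, map_smul]
    simp [hu, Complex.ext_iff, Complex.mul_re]
    ring
  have hub : ∀ x : ℂ, |f x| ≤ ‖u‖ * ‖x‖ := by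
    intro x
    rw [hfx x]
    calc |((starRingEnd ℂ) u * x).re| ≤ ‖(starRingEnd ℂ) u * x‖ := Complex.abs_re_le_norm _
      _ = ‖u‖ * ‖x‖ := by rw [norm_mul]; simp
  have hune : u ≠ 0 := by
    intro h0
    have : ∀ x : ℂ, f x = 0 := by
      intro x; rw [hfx x, h0]; simp
    have : ‖f‖ = 0 := by
      apply le_antisymm _ (norm_nonneg f)
      apply ContinuousLinearMap.opNorm_le_bound _ le_rfl
      intro x; rw [this x]; simp [norm_nonneg]
    rw [hf] at this; norm_num at this
  refine ⟨u, ?_, hfx⟩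
  have h1 : ‖f‖ ≤ ‖u‖ := by
    apply ContinuousLinearMap.opNorm_le_bound _ (norm_nonneg u)
    intro x
    rw [Real.norm_eq_abs]
    exact hub x
  have h2 : ‖u‖ ≤ ‖f‖ := by
    have hfu : f u = ‖u‖ ^ 2 := by
      rw [hfx u, mul_comm, Complex.mul_conj]
      simp [Complex.normSq_eq_norm_sq]
      norm_cast
    have := f.le_opNorm u
    rw [hfu, hf, one_mul, Real.norm_eq_abs, _root_.abs_of_nonneg (by positivity)] at this
    nlinarith [norm_nonneg u, norm_pos_iff.2 hune]
  rw [hf] at h1 h2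
  linarith

/-- the functional `x ↦ Re (conj u * x)` -/
noncomputable def fu (u : ℂ) : ℂ →L[ℝ] ℝ :=
  Complex.reCLM.comp (((starRingEnd ℂ) u) • ContinuousLinearMap.id ℝ ℂ)

lemma fu_apply (u x : ℂ) : fu u x = ((starRingEnd ℂ) u * x).re := by
  simp [fu, Complex.smul_re]

lemma fu_norm (u : ℂ) (hu : ‖u‖ = 1) : ‖fu u‖ = 1 := by
  apply le_antisymm
  · apply ContinuousLinearMap.opNorm_le_bound _ zero_le_one
    intro x
    rw [fu_apply, Real.norm_eq_abs]
    calc |((starRingEnd ℂ) u * x).re| ≤ ‖(starRingEnd ℂ) u * x‖ := Complex.abs_re_le_norm _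
      _ = 1 * ‖x‖ := by rw [norm_mul]; simp [hu]
  · have := (fu u).le_opNorm u
    rw [fu_apply, mul_comm, Complex.mul_conj, hu, mul_one, Real.norm_eq_abs] at this
    have h2 : Complex.normSq u = 1 := by
      rw [Complex.normSq_eq_norm_sq, hu, one_pow]
    rw [h2] at this
    simpa using this

-- key identity
lemma key_id (u x : ℂ) (hu : ‖u‖ = 1) (hx : ‖x‖ = 1) :
    2 * |((starRingEnd ℂ) u * x).re| = ‖x ^ 2 + u ^ 2‖ := by
  have hune : u ≠ 0 := by intro h; rw [h] at hu; simp at hu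
  have hxne : x ≠ 0 := by intro h; rw [h] at hx; simp at hx
  have hcu : (starRingEnd ℂ) u = u⁻¹ :=
    (Complex.inv_eq_conj hu).symm
  have hcx : (starRingEnd ℂ) x = x⁻¹ :=
    (Complex.inv_eq_conj hx).symm
  have h1 : ((2 : ℂ) * (((starRingEnd ℂ) u * x).re : ℂ)) =
      (starRingEnd ℂ) u * x + (starRingEnd ℂ) ((starRingEnd ℂ) u * x) := by
    rw [Complex.add_conj]
    norm_cast
  have h2 : (starRingEnd ℂ) u * x + (starRingEnd ℂ) ((starRingEnd ℂ) u * x)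
      = (x ^ 2 + u ^ 2) * (u⁻¹ * x⁻¹) := by
    rw [map_mul, Complex.conj_conj, hcu, hcx]
    field_simp
  have h3 := congrArg (fun z : ℂ => ‖z‖) h1
  simp only [h2] at h3
  rw [norm_mul, norm_mul, norm_mul, norm_inv, norm_inv, hu, hx, Complex.norm_real,
    Real.norm_eq_abs] at h3
  have h4 : ‖(2:ℂ)‖ = 2 := by
    rw [Complex.norm_two]
  rw [h4] at h3
  rw [h3]; ring

-- square root on circle
lemma circle_sqrt (w : ℂ) (hw : ‖w‖ = 1) : ∃ x : ℂ, ‖x‖ = 1 ∧ x ^ 2 = w := by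
  have hwne : w ≠ 0 := by intro h; rw [h] at hw; simp at hw
  refine ⟨Complex.exp (Complex.log w / 2), ?_, ?_⟩
  · rw [Complex.norm_exp]
    have : (Complex.log w / 2).re = 0 := by
      simp [Complex.div_re, Complex.log_re, hw]
    rw [this, Real.exp_zero]
  · rw [sq, ← Complex.exp_add, add_halves]
    exact Complex.exp_log hwne

lemma two_pow_inv_eq (n : ℕ) (hn : 1 ≤ n) : ((2:ℝ) ^ (n-1))⁻¹ = 2 * ((2:ℝ)^n)⁻¹ := by
  have h : (2:ℝ)^n = 2 * 2^(n-1) := by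
    rw [← pow_succ']
    congr 1
    omega
  rw [h]
  rw [mul_inv]
  rw [← mul_assoc, mul_inv_cancel₀ (by norm_num : (2:ℝ) ≠ 0), one_mul]

lemma prodset_bdd {n : ℕ} (g : Fin n → (ℂ →L[ℝ] ℝ)) (hg : ∀ j, ‖g j‖ = 1) :
    ∀ t ∈ {t : ℝ | ∃ x : ℂ, ‖x‖ ≤ 1 ∧ t = ‖∏ j, g j x‖}, t ≤ 1 := by
  rintro t ⟨x, hx, rfl⟩
  rw [Real.norm_eq_abs, Finset.abs_prod]
  apply Finset.prod_le_one
  · intro j _; positivity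
  · intro j _
    calc |g j x| ≤ ‖g j‖ * ‖x‖ := (g j).le_opNorm x
      _ ≤ 1 := by rw [hg j]; simpa using hx

lemma supNormProd_lower (n : ℕ) (hn : 1 ≤ n) (g : Fin n → (ℂ →L[ℝ] ℝ))
    (hg : ∀ j, ‖g j‖ = 1) : ((2:ℝ) ^ (n-1))⁻¹ ≤ supNormProd g := by
  choose u hu hrep using fun j => func_rep (g j) (hg j)
  set z : Fin n → ℂ := fun j => -(u j)^2 with hz
  have hz1 : ∀ j, ‖z j‖ = 1 := by
    intro j; rw [hz]; simp [norm_pow, hu j]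
  obtain ⟨w, hw1, hw2⟩ := circle_lower n hn z hz1
  obtain ⟨x, hx1, hx2⟩ := circle_sqrt w hw1
  have hfact : ∀ j, |g j x| = ‖w - z j‖ / 2 := by
    intro j
    have := key_id (u j) x (hu j) hx1
    rw [hrep j x]
    rw [hz]
    have hwz : w - -(u j)^2 = x^2 + (u j)^2 := by rw [hx2]; ring
    rw [hwz, ← this]
    ring
  have hprod : ‖∏ j, g j x‖ = (∏ j, ‖w - z j‖) * ((2:ℝ)^n)⁻¹ := by
    rw [Real.norm_eq_abs, Finset.abs_prod]
    rw [Finset.prod_congr rfl (fun j _ => hfact j)]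
    rw [Finset.prod_div_distrib]
    simp [div_eq_mul_inv]
  have hmem : ‖∏ j, g j x‖ ∈ {t : ℝ | ∃ x : ℂ, ‖x‖ ≤ 1 ∧ t = ‖∏ j, g j x‖} :=
    ⟨x, le_of_eq hx1, rfl⟩
  have hle : ((2:ℝ) ^ (n-1))⁻¹ ≤ ‖∏ j, g j x‖ := by
    rw [hprod, two_pow_inv_eq n hn]
    apply mul_le_mul_of_nonneg_right hw2 (by positivity)
  exact le_trans hle (le_csSup ⟨1, prodset_bdd g hg⟩ hmem)

lemma supNormProd_opt (n : ℕ) (hn : 1 ≤ n) :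
    ∃ g : Fin n → (ℂ →L[ℝ] ℝ), (∀ j, ‖g j‖ = 1) ∧
      supNormProd g = ((2:ℝ) ^ (n-1))⁻¹ := by
  have hn0 : n ≠ 0 := by omega
  have hnC : (n:ℂ) ≠ 0 := by exact_mod_cast hn0
  set ζ : ℂ := Complex.exp (2 * Real.pi * Complex.I / n) with hζ
  have hprim : IsPrimitiveRoot ζ n := Complex.isPrimitiveRoot_exp n hn0
  set u : Fin n → ℂ := fun j => Complex.I * Complex.exp (Real.pi * Complex.I * j / n) with hu
  have hu1 : ∀ j, ‖u j‖ = 1 := by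
    intro j
    rw [hu]
    simp only [norm_mul, Complex.norm_I, Complex.norm_exp, one_mul]
    have : (Real.pi * Complex.I * j / n).re = 0 := by
      simp [Complex.div_re]
    rw [this, Real.exp_zero]
  have husq : ∀ j : Fin n, (u j)^2 = -(ζ ^ (j:ℕ)) := by
    intro j
    rw [hu]
    rw [mul_pow, Complex.I_sq]
    have h1 : Complex.exp (Real.pi * Complex.I * j / n) ^ 2
        = Complex.exp (2 * (Real.pi * Complex.I * j / n)) := by
      rw [← Complex.exp_nat_mul]
      norm_num
    have h2 : ζ ^ (j:ℕ) = Complex.exp ((j:ℕ) * (2 * Real.pi * Complex.I / n)) := by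
      rw [hζ, Complex.exp_nat_mul]
    rw [h1, h2]
    ring_nf
  set g : Fin n → (ℂ →L[ℝ] ℝ) := fun j => fu (u j) with hg
  have hg1 : ∀ j, ‖g j‖ = 1 := fun j => fu_norm _ (hu1 j)
  refine ⟨g, hg1, ?_⟩
  have hfact : ∀ x : ℂ, ‖x‖ = 1 → ∀ j, |g j x| = ‖x^2 - ζ ^ (j:ℕ)‖ / 2 := by
    intro x hx j
    have hk := key_id (u j) x (hu1 j) hx
    rw [husq j, ← sub_eq_add_neg] at hk
    rw [hg, fu_apply]
    linarith
  have hprodfact : ∀ x : ℂ, ‖x‖ = 1 → ‖∏ j, g j x‖ = ‖(x^2)^n - 1‖ * ((2:ℝ)^n)⁻¹ := by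
    intro x hx
    rw [Real.norm_eq_abs, Finset.abs_prod,
      Finset.prod_congr rfl (fun j _ => hfact x hx j), Finset.prod_div_distrib]
    have : (∏ j : Fin n, ‖x^2 - ζ ^ (j:ℕ)‖) = ‖(x^2)^n - 1‖ := by
      rw [← norm_prod, prod_X_sub_pow_zeta n hn hprim (x^2)]
    rw [this]
    simp [div_eq_mul_inv]
  -- supNormProd g = sSup is the greatest
  have hgreat : IsGreatest {t : ℝ | ∃ x : ℂ, ‖x‖ ≤ 1 ∧ t = ‖∏ j, g j x‖}
      (((2:ℝ) ^ (n-1))⁻¹) := by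
    constructor
    · -- membership: x₀
      set x₀ : ℂ := Complex.exp (Real.pi * Complex.I / (2*n)) with hx₀
      have hx₀1 : ‖x₀‖ = 1 := by
        rw [hx₀, Complex.norm_exp]
        have : (Real.pi * Complex.I / (2*n)).re = 0 := by simp [Complex.div_re]
        rw [this, Real.exp_zero]
      refine ⟨x₀, le_of_eq hx₀1, ?_⟩
      rw [hprodfact x₀ hx₀1]
      have hpow : (x₀^2)^n = -1 := by
        rw [hx₀, ← pow_mul, ← Complex.exp_nat_mul]
        have : ((2*n : ℕ) : ℂ) * (Real.pi * Complex.I / (2*n)) = Real.pi * Complex.I := by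
          have h2n : ((2*n : ℕ) : ℂ) = 2 * (n : ℂ) := by push_cast; ring
          rw [h2n]
          field_simp
        rw [this, Complex.exp_pi_mul_I]
      rw [hpow]
      have : ‖(-1 : ℂ) - 1‖ = 2 := by norm_num
      rw [this, two_pow_inv_eq n hn]
    · rintro t ⟨x, hx, rfl⟩
      rcases eq_or_ne x 0 with rfl | hxne
      · have : ∀ j, g j (0:ℂ) = 0 := fun j => by rw [hg, fu_apply]; simp
        rw [Finset.prod_congr rfl (fun j _ => this j)]
        rw [Finset.prod_const]
        rw [zero_pow (by simp [Finset.card_univ]; omega : (Finset.univ : Finset (Fin n)).card ≠ 0)]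
        simp
      · set s : ℝ := ‖x‖ with hs
        have hs0 : 0 < s := norm_pos_iff.2 hxne
        set xh : ℂ := (s⁻¹ : ℝ) • x with hxh
        have hxh1 : ‖xh‖ = 1 := by
          rw [hxh, norm_smul]
          simp [← hs, abs_of_pos hs0, inv_mul_cancel₀ (ne_of_gt hs0)]
        have hscale : ∀ j, |g j x| ≤ |g j xh| := by
          intro j
          have : x = s • xh := by
            rw [hxh, smul_smul, mul_inv_cancel₀ (ne_of_gt hs0), one_smul]
          rw [this, map_smul]
          rw [smul_eq_mul, abs_mul, abs_of_pos hs0]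
          nlinarith [abs_nonneg (g j xh), hs0, hx]
        calc ‖∏ j, g j x‖ = ∏ j, |g j x| := by rw [Real.norm_eq_abs, Finset.abs_prod]
          _ ≤ ∏ j, |g j xh| := Finset.prod_le_prod (fun j _ => abs_nonneg _)
              (fun j _ => hscale j)
          _ = ‖∏ j, g j xh‖ := by rw [Real.norm_eq_abs, Finset.abs_prod]
          _ = ‖(xh^2)^n - 1‖ * ((2:ℝ)^n)⁻¹ := hprodfact xh hxh1
          _ ≤ 2 * ((2:ℝ)^n)⁻¹ := by
              apply mul_le_mul_of_nonneg_right _ (by positivity)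
              calc ‖(xh^2)^n - 1‖ ≤ ‖(xh^2)^n‖ + ‖(1:ℂ)‖ := norm_sub_le _ _
                _ = 2 := by
                    rw [norm_pow, norm_pow, hxh1, one_pow, one_pow, norm_one]
                    norm_num
          _ = ((2:ℝ) ^ (n-1))⁻¹ := (two_pow_inv_eq n hn).symm
  exact hgreat.csSup_eq

lemma supNormProd_comp_cE {n : ℕ} (f : Fin n → (EuclideanSpace ℝ (Fin 2) →L[ℝ] ℝ)) :
    supNormProd (fun j => (f j).comp cE.toLinearIsometry.toContinuousLinearMap)
      = supNormProd f := by
  unfold supNormProd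
  congr 1
  ext t
  constructor
  · rintro ⟨z, hz, rfl⟩
    exact ⟨cE z, by rw [cE_norm]; exact hz, by simp⟩
  · rintro ⟨x, hx, rfl⟩
    refine ⟨cE.symm x, by rw [cE_symm_norm]; exact hx, ?_⟩
    simp

lemma supNormProd_comp_cE_symm {n : ℕ} (g : Fin n → (ℂ →L[ℝ] ℝ)) :
    supNormProd (fun j => (g j).comp cE.symm.toLinearIsometry.toContinuousLinearMap)
      = supNormProd g := by
  unfold supNormProd
  congr 1
  ext t
  constructor
  · rintro ⟨x, hx, rfl⟩
    exact ⟨cE.symm x, by rw [cE_symm_norm]; exact hx, by simp⟩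
  · rintro ⟨z, hz, rfl⟩
    refine ⟨cE z, by rw [cE_norm]; exact hz, ?_⟩
    simp

lemma euclid_polar (n : ℕ) (hn : 1 ≤ n) :
    polarizationConst ℝ (EuclideanSpace ℝ (Fin 2)) n = (2 : ℝ) ^ (n - 1) := by
  unfold polarizationConst
  have hinf : sInf {y : ℝ | ∃ f : Fin n → (EuclideanSpace ℝ (Fin 2) →L[ℝ] ℝ),
      (∀ j, ‖f j‖ = 1) ∧ y = supNormProd f} = ((2:ℝ) ^ (n-1))⁻¹ := by
    apply IsLeast.csInf_eq
    constructor
    · obtain ⟨g, hg1, hg2⟩ := supNormProd_opt n hn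
      refine ⟨fun j => (g j).comp cE.symm.toLinearIsometry.toContinuousLinearMap, ?_, ?_⟩
      · intro j
        refine (ContinuousLinearMap.opNorm_comp_linearIsometryEquiv (g j) cE.symm).trans ?_
        exact hg1 j
      · rw [supNormProd_comp_cE_symm, hg2]
    · rintro y ⟨f, hf1, rfl⟩
      rw [← supNormProd_comp_cE f]
      apply supNormProd_lower n hn
      intro j
      refine (ContinuousLinearMap.opNorm_comp_linearIsometryEquiv (f j) cE).trans ?_
      exact hf1 j
  rw [hinf, inv_inv]

/-- `cₙ(ℝ²) = 2^{n-1}`; equivalently the n-th metric Chebyshev constant of the unit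
circle is 2: for any `y₁,…,yₙ ∈ S¹` there is `y ∈ S¹` with `∏ⱼ ‖y-yⱼ‖ ≥ 2`, and 2 is
optimal. -/
theorem polarizationConst_euclidean_real_two (n : ℕ) (hn : 1 ≤ n) :
    polarizationConst ℝ (EuclideanSpace ℝ (Fin 2)) n = (2 : ℝ) ^ (n - 1) ∧
      (∀ y : Fin n → EuclideanSpace ℝ (Fin 2), (∀ j, ‖y j‖ = 1) →
        ∃ x : EuclideanSpace ℝ (Fin 2), ‖x‖ = 1 ∧ (2 : ℝ) ≤ ∏ j, ‖x - y j‖) ∧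
      sInf {s : ℝ | ∃ y : Fin n → EuclideanSpace ℝ (Fin 2), (∀ j, ‖y j‖ = 1) ∧
          s = sSup {t : ℝ | ∃ x : EuclideanSpace ℝ (Fin 2), ‖x‖ = 1 ∧
            t = ∏ j, ‖x - y j‖}} = 2 :=
  ⟨euclid_polar n hn, euclid_lower n hn, euclid_cheby n hn⟩
end

section
/- The linear polarization constant of the 2-dimensional real Euclidean space is c(ℝ²) = lim_{n→∞} c_n(ℝ²)^{1/n} = 2. -/
open scoped BigOperators

section Helpers
open Complex Finset Real

lemma cos_eq_exp (t : ℝ) :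
    (Real.cos t : ℂ) = Complex.exp (-(t * I)) * (Complex.exp (2 * t * I) + 1) / 2 := by
  rw [Complex.ofReal_cos, Complex.cos]
  have h : Complex.exp (-(t * I)) * Complex.exp (2 * t * I) = Complex.exp (t * I) := by
    rw [← Complex.exp_add]; ring_nf
  rw [mul_add, h, mul_one]; ring_nf

lemma abs_cos_eq (t : ℝ) :
    |Real.cos t| = ‖Complex.exp (2 * t * I) + 1‖ / 2 := by
  have h1 : |Real.cos t| = ‖((Real.cos t : ℂ))‖ := by
    rw [Complex.norm_real, Real.norm_eq_abs]
  rw [h1, cos_eq_exp, norm_div, norm_mul]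
  have h2 : ‖Complex.exp (-(t * I))‖ = 1 := by
    rw [Complex.norm_exp]; simp
  rw [h2, one_mul]
  simp

lemma prod_abs_cos (n : ℕ) (a : ℕ → ℝ) (θ : ℝ) :
    ∏ j ∈ Finset.range n, |Real.cos (θ - a j)|
      = (1/2)^n * ‖∏ j ∈ Finset.range n,
          (Complex.exp (2 * ((θ - a j : ℝ) : ℂ) * I) + 1)‖ := by
  rw [norm_prod, Finset.prod_congr rfl (fun j _ => abs_cos_eq (θ - a j)),
    Finset.prod_div_distrib, Finset.prod_const, Finset.card_range]
  rw [one_div, inv_pow, ← div_eq_inv_mul]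

lemma prod_range_sub_pow {n : ℕ} (hn : 0 < n) {ζ : ℂ} (hζ : IsPrimitiveRoot ζ n) (x : ℂ) :
    ∏ j ∈ Finset.range n, (x - ζ ^ j) = x ^ n - 1 := by
  have h2 : Polynomial.nthRootsFinset n (1:ℂ) = (Finset.range n).image (ζ ^ ·) := by
    symm
    apply Finset.eq_of_subset_of_card_le
    · intro z hz
      simp only [Finset.mem_image] at hz
      obtain ⟨j, hj, rfl⟩ := hz
      refine (Polynomial.mem_nthRootsFinset hn 1).2 ?_
      rw [← pow_mul, mul_comm, pow_mul, hζ.pow_eq_one, one_pow]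
    · rw [hζ.card_nthRootsFinset, Finset.card_image_of_injOn hζ.injOn_pow, Finset.card_range]
  have h1 := congrArg (Polynomial.eval x) (Polynomial.X_pow_sub_one_eq_prod hn hζ)
  simp only [Polynomial.eval_sub, Polynomial.eval_pow, Polynomial.eval_X, Polynomial.eval_one,
    Polynomial.eval_prod, Polynomial.eval_C] at h1
  rw [h1, h2, Finset.prod_image]
  intro a ha b hb e
  exact hζ.pow_inj (Finset.mem_range.1 ha) (Finset.mem_range.1 hb) e

/-- Upper bound: product of |cos| at equally spaced angles. -/
lemma prod_abs_cos_le {n : ℕ} (hn : 0 < n) (θ : ℝ) :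
    ∏ j ∈ Finset.range n, |Real.cos (θ - j * π / n)| ≤ 2 * (1/2)^n := by
  set ζ : ℂ := Complex.exp (2 * π * I / n) with hζdef
  have hζ : IsPrimitiveRoot ζ n := Complex.isPrimitiveRoot_exp n hn.ne'
  set ζ' : ℂ := Complex.exp (-(2 * π * I / n)) with hζ'def
  have hζζ' : ∀ j : ℕ, ζ' ^ j * ζ ^ j = 1 := by
    intro j
    rw [← mul_pow, ← Complex.exp_add]
    simp [one_pow]
  set y : ℂ := Complex.exp (2 * θ * I) with hydef
  have hy : ‖y‖ = 1 := by rw [Complex.norm_exp]; simp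
  have key : ∀ j : ℕ, Complex.exp (2 * ((θ - j * π / n : ℝ) : ℂ) * I) + 1
      = ζ' ^ j * (y + ζ ^ j) := by
    intro j
    have e1 : Complex.exp (2 * ((θ - j * π / n : ℝ) : ℂ) * I) = y * ζ' ^ j := by
      rw [hydef, hζ'def, ← Complex.exp_nat_mul, ← Complex.exp_add]
      congr 1
      push_cast
      have hcn : (n : ℂ) ≠ 0 := Nat.cast_ne_zero.2 hn.ne'
      field_simp
      ring
    rw [e1, mul_add, hζζ' j]
    ring
  rw [prod_abs_cos n (fun j => j * π / n) θ]
  have e2 : ∏ j ∈ Finset.range n, (Complex.exp (2 * ((θ - j * π / n : ℝ) : ℂ) * I) + 1)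
      = (∏ j ∈ Finset.range n, ζ' ^ j) * ∏ j ∈ Finset.range n, (y + ζ ^ j) := by
    rw [← Finset.prod_mul_distrib]
    exact Finset.prod_congr rfl fun j _ => key j
  have e3 : ∏ j ∈ Finset.range n, (y + ζ ^ j) = (-1:ℂ)^n * ((-y) ^ n - 1) := by
    have h : ∀ j ∈ Finset.range n, y + ζ^j = (-1) * (-y - ζ^j) := fun j _ => by ring
    rw [Finset.prod_congr rfl h, Finset.prod_mul_distrib, Finset.prod_const, Finset.card_range,
      prod_range_sub_pow hn hζ]
  have habs' : ‖∏ j ∈ Finset.range n, ζ' ^ j‖ = 1 := by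
    rw [norm_prod]
    refine Finset.prod_eq_one fun j _ => ?_
    rw [norm_pow, Complex.norm_exp]
    simp
  calc (1/2:ℝ)^n * ‖∏ j ∈ Finset.range n,
          (Complex.exp (2 * ((θ - j * π / n : ℝ) : ℂ) * I) + 1)‖
      = (1/2)^n * ‖(-1:ℂ)^n * ((-y) ^ n - 1)‖ := by
        rw [e2, e3, norm_mul, habs', one_mul]
    _ ≤ (1/2)^n * 2 := by
        gcongr
        rw [norm_mul, norm_pow, norm_neg, norm_one, one_pow, one_mul]
        calc ‖(-y)^n - 1‖ ≤ ‖(-y)^n‖ + ‖(1:ℂ)‖ :=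
              norm_sub_le _ _
          _ ≤ 2 := by rw [norm_pow, norm_neg, hy, one_pow, norm_one]; norm_num
    _ = 2 * (1/2)^n := by ring

/-- Lower bound: some angle gives product of |cos| at least 2^{-n}. -/
lemma exists_prod_abs_cos_ge (n : ℕ) (a : ℕ → ℝ) :
    ∃ θ : ℝ, 1 ≤ ‖∏ j ∈ Finset.range n,
        (Complex.exp (2 * ((θ - a j : ℝ) : ℂ) * I) + 1)‖ := by
  set N : ℕ := 2 * n + 1 with hN
  have hNpos : 0 < N := Nat.succ_pos _
  set ζ : ℂ := Complex.exp (2 * π * I / N) with hζdef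
  have hζ : IsPrimitiveRoot ζ N := Complex.isPrimitiveRoot_exp N hNpos.ne'
  have hζabs : ‖ζ‖ = 1 := by
    rw [hζdef]
    have : (2 * π * I / N : ℂ) = ((2 * π / N : ℝ) : ℂ) * I := by push_cast; ring
    rw [this, Complex.norm_exp_ofReal_mul_I]
  set w : ℕ → ℂ := fun j => Complex.exp (-(2 * (a j : ℂ)) * I) with hw
  have hwabs : ∀ j, ‖w j‖ = 1 := by
    intro j
    simp only [hw]
    have : (-(2 * ((a j : ℝ) : ℂ)) * I) = ((-(2 * a j) : ℝ) : ℂ) * I := by push_cast; ring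
    rw [this, Complex.norm_exp_ofReal_mul_I]
  set θk : ℕ → ℝ := fun k => 2 * π * k / N with hθk
  set M : ℕ := 2 * n * (N - 1) with hM
  have h2 : 2 * n * N = 2 * n * (N - 1) + 2 * n := by
    rw [hN, Nat.succ_sub_one]
    ring
  have factor : ∀ k j : ℕ, Complex.exp (2 * ((θk k - a j : ℝ) : ℂ) * I) = ζ ^ (2 * k) * w j := by
    intro k j
    rw [hw, hζdef, ← Complex.exp_nat_mul, ← Complex.exp_add]
    congr 1
    push_cast [hθk]
    have hcn : (N : ℂ) ≠ 0 := Nat.cast_ne_zero.2 hNpos.ne'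
    field_simp
    ring
  set G : ℕ → ℂ := fun k => ∏ j ∈ Finset.range n, (ζ ^ (2 * k) * w j + 1) with hG
  have expand : ∀ k : ℕ, G k = ∑ S ∈ (Finset.range n).powerset,
      ζ ^ (2 * k * S.card) * ∏ j ∈ S, w j := by
    intro k
    simp only [hG]
    rw [Finset.prod_add]
    refine Finset.sum_congr rfl fun S hS => ?_
    rw [Finset.prod_const_one, mul_one, Finset.prod_mul_distrib, Finset.prod_const, ← pow_mul]
  have key : ∑ k ∈ Finset.range N, G k * ζ ^ (M * k)
      = (N : ℂ) * ∏ j ∈ Finset.range n, w j := by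
    have step1 : ∀ S ∈ (Finset.range n).powerset,
        ∑ k ∈ Finset.range N, (ζ ^ (2 * k * S.card) * ∏ j ∈ S, w j) * ζ ^ (M * k)
          = if S = Finset.range n then (N : ℂ) * ∏ j ∈ Finset.range n, w j else 0 := by
      intro S hS
      have hScard : S.card ≤ n := le_trans (Finset.card_le_card (Finset.mem_powerset.1 hS))
        (le_of_eq (Finset.card_range n))
      have term : ∀ k, (ζ ^ (2 * k * S.card) * ∏ j ∈ S, w j) * ζ ^ (M * k)
          = (∏ j ∈ S, w j) * (ζ ^ (2 * S.card + M)) ^ k := by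
        intro k
        have hAB : ζ ^ (2 * k * S.card) * ζ ^ (M * k) = (ζ ^ (2 * S.card + M)) ^ k := by
          rw [← pow_add, ← pow_mul]
          congr 1
          ring
        rw [mul_right_comm, hAB, mul_comm]
      rw [Finset.sum_congr rfl fun k _ => term k, ← Finset.mul_sum]
      by_cases hSeq : S = Finset.range n
      · have hcard : S.card = n := by rw [hSeq, Finset.card_range]
        have hone : ζ ^ (2 * S.card + M) = 1 := by
          have he : 2 * S.card + M = 2 * n * N := by rw [hcard, hM]; omega
          rw [he, mul_comm (2*n) N, pow_mul, hζ.pow_eq_one, one_pow]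
        rw [if_pos hSeq, hone, hSeq]
        simp [mul_comm]
      · have hlt : S.card < n := by
          rcases lt_or_eq_of_le hScard with h | h
          · exact h
          · exact absurd (Finset.eq_of_subset_of_card_le (Finset.mem_powerset.1 hS)
              (by rw [Finset.card_range, h])) hSeq
        have hnd : ¬ (N ∣ 2 * S.card + M) := by
          intro hdvd
          have hdd : N ∣ 2 * n * N := dvd_mul_left N (2 * n)
          have hsum : (2 * S.card + M) + (2 * n - 2 * S.card) = 2 * n * N := by
            rw [h2, hM]; omega
          have hd2 : N ∣ 2 * n - 2 * S.card := by
            have h3 := Nat.dvd_sub hdd hdvd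
            have h4 : 2 * n * N - (2 * S.card + M) = 2 * n - 2 * S.card := by omega
            rwa [h4] at h3
          have h5 := Nat.le_of_dvd (by omega) hd2
          omega
        have hne1 : ζ ^ (2 * S.card + M) ≠ 1 := fun h =>
          hnd ((hζ.pow_eq_one_iff_dvd _).1 h)
        have hxN : (ζ ^ (2 * S.card + M)) ^ N = 1 := by
          rw [← pow_mul, mul_comm, pow_mul, hζ.pow_eq_one, one_pow]
        rw [if_neg hSeq, geom_sum_eq hne1, hxN, sub_self, zero_div, mul_zero]
    calc ∑ k ∈ Finset.range N, G k * ζ ^ (M * k)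
        = ∑ k ∈ Finset.range N, ∑ S ∈ (Finset.range n).powerset,
            (ζ ^ (2 * k * S.card) * ∏ j ∈ S, w j) * ζ ^ (M * k) := by
          refine Finset.sum_congr rfl fun k _ => ?_
          rw [expand k, Finset.sum_mul]
      _ = ∑ S ∈ (Finset.range n).powerset, ∑ k ∈ Finset.range N,
            (ζ ^ (2 * k * S.card) * ∏ j ∈ S, w j) * ζ ^ (M * k) := Finset.sum_comm
      _ = ∑ S ∈ (Finset.range n).powerset,
            if S = Finset.range n then (N : ℂ) * ∏ j ∈ Finset.range n, w j else 0 :=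
          Finset.sum_congr rfl step1
      _ = (N : ℂ) * ∏ j ∈ Finset.range n, w j := by
          rw [Finset.sum_ite_eq' (Finset.range n).powerset]
          simp
  have habs : (N : ℝ) ≤ ∑ k ∈ Finset.range N, ‖G k‖ := by
    have h1 : ‖(N : ℂ) * ∏ j ∈ Finset.range n, w j‖ = N := by
      rw [norm_mul, norm_prod, Finset.prod_congr rfl fun j _ => hwabs j]
      simp
    calc (N : ℝ) = ‖∑ k ∈ Finset.range N, G k * ζ ^ (M * k)‖ := by rw [key, h1]
      _ ≤ ∑ k ∈ Finset.range N, ‖G k * ζ ^ (M * k)‖ := by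
          exact
            norm_sum_le (Finset.range N) (fun k => G k * ζ ^ (M * k))
      _ = ∑ k ∈ Finset.range N, ‖G k‖ := by
          refine Finset.sum_congr rfl fun k _ => ?_
          rw [norm_mul, norm_pow, hζabs, one_pow, mul_one]
  have hex : ∃ k ∈ Finset.range N, (1 : ℝ) ≤ ‖G k‖ := by
    apply Finset.exists_le_of_sum_le ⟨0, Finset.mem_range.2 hNpos⟩
    simpa using habs
  obtain ⟨k, hk, hk1⟩ := hex
  refine ⟨θk k, ?_⟩
  have heq : ∏ j ∈ Finset.range n, (Complex.exp (2 * ((θk k - a j : ℝ) : ℂ) * I) + 1) = G k := by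
    simp only [hG]
    exact Finset.prod_congr rfl fun j _ => by rw [factor k j]
  rw [heq]
  exact hk1

end Helpers

section Geom
open Real Filter
open scoped InnerProductSpace

noncomputable def vang (θ : ℝ) : EuclideanSpace ℝ (Fin 2) :=
  (WithLp.equiv 2 (Fin 2 → ℝ)).symm ![Real.cos θ, Real.sin θ]

lemma vang_apply_zero (θ : ℝ) : vang θ 0 = Real.cos θ := rfl
lemma vang_apply_one (θ : ℝ) : vang θ 1 = Real.sin θ := rfl

lemma norm_vang (θ : ℝ) : ‖vang θ‖ = 1 := by
  rw [EuclideanSpace.norm_eq]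
  rw [show ∑ i, ‖vang θ i‖^2 = cos θ ^ 2 + sin θ ^ 2 by
    rw [Fin.sum_univ_two, vang_apply_zero, vang_apply_one]
    simp [Real.norm_eq_abs, sq_abs]]
  rw [Real.cos_sq_add_sin_sq]
  exact Real.sqrt_one

lemma inner_vang (α : ℝ) (x : EuclideanSpace ℝ (Fin 2)) :
    ⟪vang α, x⟫_ℝ = Real.cos α * x 0 + Real.sin α * x 1 := by
  rw [PiLp.inner_apply, Fin.sum_univ_two]
  simp [vang_apply_zero, vang_apply_one, RCLike.inner_apply]
  ring

lemma exists_angle {u : EuclideanSpace ℝ (Fin 2)} (hu : ‖u‖ = 1) :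
    ∃ γ : ℝ, u 0 = Real.cos γ ∧ u 1 = Real.sin γ := by
  have h : u 0 ^ 2 + u 1 ^ 2 = 1 := by
    have := congrArg (· ^ 2) (EuclideanSpace.norm_eq u ▸ hu)
    simp only [one_pow] at this
    rw [← this, Real.sq_sqrt (by positivity)]
    simp [Fin.sum_univ_two, Real.norm_eq_abs, sq_abs]
  set z : ℂ := ⟨u 0, u 1⟩ with hz
  have hzabs : ‖z‖ = 1 := by
    rw [Complex.norm_def, Complex.normSq_mk]
    rw [show u 0 * u 0 + u 1 * u 1 = 1 by nlinarith]
    exact Real.sqrt_one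
  have hz0 : z ≠ 0 := by
    intro h0
    rw [h0] at hzabs
    simp at hzabs
  refine ⟨Complex.arg z, ?_, ?_⟩
  · rw [Complex.cos_arg hz0, hzabs]
    simp [hz]
  · rw [Complex.sin_arg, hzabs]
    simp [hz]

lemma exists_rep (f : EuclideanSpace ℝ (Fin 2) →L[ℝ] ℝ) (hf : ‖f‖ = 1) :
    ∃ γ : ℝ, ∀ x : EuclideanSpace ℝ (Fin 2), f x = ⟪vang γ, x⟫_ℝ := by
  set u := (InnerProductSpace.toDual ℝ (EuclideanSpace ℝ (Fin 2))).symm f with hu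
  have hun : ‖u‖ = 1 := by rw [hu, LinearIsometryEquiv.norm_map]; exact hf
  obtain ⟨γ, h0, h1⟩ := exists_angle hun
  have huv : u = vang γ := by
    ext i
    fin_cases i
    · exact h0.trans (vang_apply_zero γ).symm
    · exact h1.trans (vang_apply_one γ).symm
  exact ⟨γ, fun x => by rw [← huv, hu, InnerProductSpace.toDual_symm_apply]⟩

end Geom
section Main
open Real Filter
open scoped InnerProductSpace

local notation "X2" => EuclideanSpace ℝ (Fin 2)

lemma polar_bounds {n : ℕ} (hn : 0 < n) :
    (2:ℝ)^n / 2 ≤ polarizationConst ℝ (EuclideanSpace ℝ (Fin 2)) n ∧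
      polarizationConst ℝ (EuclideanSpace ℝ (Fin 2)) n ≤ 2^n := by
  set A : Set ℝ := {y : ℝ | ∃ f : Fin n → (X2 →L[ℝ] ℝ), (∀ j, ‖f j‖ = 1) ∧ y = supNormProd f}
    with hA
  -- every member of the sup-set is at most 1
  have hub1 : ∀ (f : Fin n → (X2 →L[ℝ] ℝ)), (∀ j, ‖f j‖ = 1) →
      ∀ t ∈ {t : ℝ | ∃ x : X2, ‖x‖ ≤ 1 ∧ t = ‖∏ j, f j x‖}, t ≤ 1 := by
    rintro f hf t ⟨x, hx, rfl⟩
    rw [Real.norm_eq_abs, Finset.abs_prod]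
    apply Finset.prod_le_one
    · intro j _; exact abs_nonneg _
    · intro j _
      calc |f j x| = ‖f j x‖ := (Real.norm_eq_abs _).symm
        _ ≤ ‖f j‖ * ‖x‖ := (f j).le_opNorm x
        _ ≤ 1 := by rw [hf j, one_mul]; exact hx
  -- lower bound for members of A
  have lbA : ∀ y ∈ A, (1/2:ℝ)^n ≤ y := by
    rintro y ⟨f, hf, rfl⟩
    choose γ hγ using fun j => exists_rep (f j) (hf j)
    set a : ℕ → ℝ := fun i => if h : i < n then γ ⟨i, h⟩ else 0 with ha
    obtain ⟨θ, hθ⟩ := exists_prod_abs_cos_ge n a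
    have happ : ∀ j : Fin n, f j (vang θ) = Real.cos (θ - γ j) := by
      intro j
      rw [hγ j (vang θ), inner_vang, vang_apply_zero, vang_apply_one, Real.cos_sub]
      ring
    have hprod : ‖∏ j, f j (vang θ)‖ = ∏ i ∈ Finset.range n, |Real.cos (θ - a i)| := by
      rw [Real.norm_eq_abs, Finset.abs_prod]
      rw [Finset.prod_congr rfl fun j _ => congrArg abs (happ j)]
      rw [← Fin.prod_univ_eq_prod_range (fun i => |Real.cos (θ - a i)|) n]
      refine Finset.prod_congr rfl fun j _ => ?_
      congr 2
      rw [ha]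
      simp only [Fin.is_lt, dif_pos, Fin.eta]
    have hlow : (1/2:ℝ)^n ≤ ‖∏ j, f j (vang θ)‖ := by
      rw [hprod, prod_abs_cos n a θ]
      calc (1/2:ℝ)^n = (1/2)^n * 1 := by ring
        _ ≤ _ := by
            apply mul_le_mul_of_nonneg_left hθ
            positivity
    refine le_trans hlow ?_
    apply le_csSup
    · exact ⟨1, hub1 f hf⟩
    · exact ⟨vang θ, le_of_eq (norm_vang θ), rfl⟩
  have hbddb : BddBelow A := ⟨(1/2)^n, lbA⟩
  -- the optimal system of functionals
  set f₀ : Fin n → (X2 →L[ℝ] ℝ) :=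
    fun j => (InnerProductSpace.toDual ℝ X2 (vang ((j : ℕ) * π / n)) : X2 →L[ℝ] ℝ) with hf₀def
  have hf₀ : ∀ j, ‖f₀ j‖ = 1 := by
    intro j
    simp only [hf₀def]
    rw [LinearIsometryEquiv.norm_map]
    exact norm_vang _
  have hmem₀ : supNormProd f₀ ∈ A := ⟨f₀, hf₀, rfl⟩
  have hAne : A.Nonempty := ⟨_, hmem₀⟩
  -- upper bound for the sup of the optimal system
  have hub₀ : supNormProd f₀ ≤ 2 * (1/2:ℝ)^n := by
    apply Real.sSup_le
    · rintro t ⟨x, hx, rfl⟩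
      have happ : ∀ j : Fin n, f₀ j x = ⟪vang ((j : ℕ) * π / n), x⟫_ℝ := fun j =>
        InnerProductSpace.toDual_apply_apply
      rw [Real.norm_eq_abs, Finset.abs_prod,
        Finset.prod_congr rfl fun j _ => congrArg abs (happ j)]
      by_cases hx0 : x = 0
      · have : |⟪vang (((⟨0, hn⟩ : Fin n) : ℕ) * π / n), x⟫_ℝ| = 0 := by
          rw [hx0, inner_zero_right, abs_zero]
        calc ∏ j : Fin n, |⟪vang ((j : ℕ) * π / n), x⟫_ℝ|
            = 0 := Finset.prod_eq_zero (Finset.mem_univ (⟨0, hn⟩ : Fin n)) this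
          _ ≤ 2 * (1/2:ℝ)^n := by positivity
      · set u : X2 := ‖x‖⁻¹ • x with hu
        have hxn : (0:ℝ) < ‖x‖ := norm_pos_iff.2 hx0
        have hun : ‖u‖ = 1 := by
          rw [hu, norm_smul, norm_inv, norm_norm, inv_mul_cancel₀ hxn.ne']
        obtain ⟨γ, h0, h1⟩ := exists_angle hun
        have hinner : ∀ α : ℝ, |⟪vang α, x⟫_ℝ| ≤ |Real.cos (γ - α)| := by
          intro α
          have hxu : x = ‖x‖ • u := by rw [hu, smul_smul, mul_inv_cancel₀ hxn.ne', one_smul]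
          rw [hxu, real_inner_smul_right, abs_mul, abs_of_nonneg (norm_nonneg x)]
          have : ⟪vang α, u⟫_ℝ = Real.cos (γ - α) := by
            rw [inner_vang, h0, h1, Real.cos_sub]
            ring
          rw [this]
          calc ‖x‖ * |Real.cos (γ - α)| ≤ 1 * |Real.cos (γ - α)| :=
              mul_le_mul_of_nonneg_right hx (abs_nonneg _)
            _ = |Real.cos (γ - α)| := one_mul _
        calc ∏ j : Fin n, |⟪vang ((j : ℕ) * π / n), x⟫_ℝ|
            ≤ ∏ j : Fin n, |Real.cos (γ - (j : ℕ) * π / n)| := by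
              apply Finset.prod_le_prod
              · intro j _; exact abs_nonneg _
              · intro j _; exact hinner _
          _ = ∏ i ∈ Finset.range n, |Real.cos (γ - i * π / n)| :=
              Fin.prod_univ_eq_prod_range (fun i => |Real.cos (γ - i * π / n)|) n
          _ ≤ 2 * (1/2:ℝ)^n := prod_abs_cos_le hn γ
    · positivity
  have hInf_lb : (1/2:ℝ)^n ≤ sInf A := le_csInf hAne lbA
  have hInf_ub : sInf A ≤ 2 * (1/2:ℝ)^n := le_trans (csInf_le hbddb hmem₀) hub₀
  have hInfpos : 0 < sInf A := lt_of_lt_of_le (by positivity) hInf_lb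
  have hpc : polarizationConst ℝ (EuclideanSpace ℝ (Fin 2)) n = (sInf A)⁻¹ := rfl
  constructor
  · rw [hpc]
    have h1 : (2 * (1/2:ℝ)^n)⁻¹ ≤ (sInf A)⁻¹ := by
      apply inv_anti₀ hInfpos hInf_ub
    calc (2:ℝ)^n / 2 = (2 * (1/2:ℝ)^n)⁻¹ := by
          rw [one_div, inv_pow, mul_inv, inv_inv]
          ring
      _ ≤ (sInf A)⁻¹ := h1
  · rw [hpc]
    calc (sInf A)⁻¹ ≤ ((1/2:ℝ)^n)⁻¹ := inv_anti₀ (by positivity) hInf_lb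
      _ = 2^n := by rw [one_div, inv_pow, inv_inv]

end Main
open Real Filter in
/-- The linear polarization constant of the Euclidean plane:
`c(ℝ²) = lim_{n→∞} cₙ(ℝ²)^{1/n} = 2`. -/
theorem polarizationConst_limit_euclidean_plane :
    Filter.Tendsto
      (fun n : ℕ => polarizationConst ℝ (EuclideanSpace ℝ (Fin 2)) n ^ (1 / (n : ℝ)))
      Filter.atTop (nhds 2) := by
  set pc : ℕ → ℝ := fun n => polarizationConst ℝ (EuclideanSpace ℝ (Fin 2)) n with hpc
  -- lower comparison function tends to 2
  have hglim : Tendsto (fun n : ℕ => (2:ℝ) ^ (1 - 1/(n:ℝ))) atTop (nhds 2) := by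
    have h1 : Tendsto (fun n : ℕ => 1 - 1/(n:ℝ)) atTop (nhds 1) := by
      have := tendsto_one_div_atTop_nhds_zero_nat (𝕜 := ℝ)
      simpa using tendsto_const_nhds.sub this
    have h2 : ContinuousAt (fun x : ℝ => (2:ℝ) ^ x) 1 :=
      Real.continuousAt_const_rpow two_ne_zero
    have h3 := h2.tendsto.comp h1
    simpa [Real.rpow_one, Function.comp_def] using h3
  apply tendsto_of_tendsto_of_tendsto_of_le_of_le' hglim tendsto_const_nhds
  · -- eventually lower bound
    filter_upwards [eventually_ge_atTop 1] with n hn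
    have hn' : 0 < n := hn
    have hb := (polar_bounds hn').1
    have hnR : (0:ℝ) < (n:ℝ) := Nat.cast_pos.2 hn'
    have hlow : (2:ℝ) ^ ((n:ℝ) - 1) ≤ pc n := by
      calc (2:ℝ) ^ ((n:ℝ) - 1) = (2:ℝ) ^ (n:ℝ) / 2 ^ (1:ℝ) := by
            rw [← Real.rpow_sub (by norm_num)]
        _ = (2:ℝ) ^ n / 2 := by rw [Real.rpow_natCast, Real.rpow_one]
        _ ≤ pc n := hb
    calc (2:ℝ) ^ (1 - 1/(n:ℝ)) = ((2:ℝ) ^ ((n:ℝ) - 1)) ^ (1/(n:ℝ)) := by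
          rw [← Real.rpow_mul (by norm_num : (0:ℝ) ≤ 2)]
          congr 1
          field_simp
      _ ≤ pc n ^ (1/(n:ℝ)) :=
          Real.rpow_le_rpow (by positivity) hlow (by positivity)
  · -- eventually upper bound
    filter_upwards [eventually_ge_atTop 1] with n hn
    have hn' : 0 < n := hn
    have hb := (polar_bounds hn').2
    have hnR : (0:ℝ) < (n:ℝ) := Nat.cast_pos.2 hn'
    have h0 : (0:ℝ) ≤ pc n := le_trans (by positivity) (polar_bounds hn').1
    calc pc n ^ (1/(n:ℝ)) ≤ ((2:ℝ)^n) ^ (1/(n:ℝ)) :=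
          Real.rpow_le_rpow h0 hb (by positivity)
      _ = 2 := by
          rw [← Real.rpow_natCast 2 n, ← Real.rpow_mul (by norm_num)]
          rw [show (n:ℝ) * (1/(n:ℝ)) = 1 by field_simp]
          exact Real.rpow_one 2
end

section
/- Gross's rendezvous theorem: for every compact connected metric space (X, ρ) there exists a unique number r = r(X) such that for every n and every choice of points x₁,...,xₙ ∈ X there exists x ∈ X with (1/n) ∑_{j=1}^n ρ(x, x_j) = r. -/
open scoped BigOperators
open Finset

set_option linter.unusedSectionVars false

namespace GrossAux



variable {X : Type*} [MetricSpace X] [CompactSpace X] [Nonempty X]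

noncomputable def avgD {n : ℕ} (x : Fin n → X) (y : X) : ℝ := (∑ j, dist y (x j)) / n

lemma continuous_avgD {n : ℕ} (x : Fin n → X) : Continuous (avgD x) := by
  unfold avgD
  exact (continuous_finset_sum _ fun j _ => continuous_id.dist continuous_const).div_const _

lemma exists_min {n : ℕ} (x : Fin n → X) : ∃ y₀ : X, ∀ y, avgD x y₀ ≤ avgD x y := by
  obtain ⟨y₀, -, h⟩ := isCompact_univ.exists_isMinOn Set.univ_nonempty
    (continuous_avgD x).continuousOn
  exact ⟨y₀, fun y => h (Set.mem_univ y)⟩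

lemma exists_max {n : ℕ} (x : Fin n → X) : ∃ y₁ : X, ∀ y, avgD x y ≤ avgD x y₁ := by
  obtain ⟨y₁, -, h⟩ := isCompact_univ.exists_isMaxOn Set.univ_nonempty
    (continuous_avgD x).continuousOn
  exact ⟨y₁, fun y => h (Set.mem_univ y)⟩

lemma cross {n m : ℕ} (hn : 0 < n) (hm : 0 < m) (x : Fin n → X) (z : Fin m → X)
    {y₀ y₁ : X} (h₀ : ∀ y, avgD x y₀ ≤ avgD x y) (h₁ : ∀ y, avgD z y ≤ avgD z y₁) :
    avgD x y₀ ≤ avgD z y₁ := by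
  have hn' : (0:ℝ) < n := by exact_mod_cast hn
  have hm' : (0:ℝ) < m := by exact_mod_cast hm
  have key : (∑ j, avgD x (z j)) / m = (∑ i, avgD z (x i)) / n := by
    unfold avgD
    rw [← Finset.sum_div, ← Finset.sum_div, div_div, div_div, Finset.sum_comm, mul_comm]
    congr 1
    refine Finset.sum_congr rfl fun i _ => Finset.sum_congr rfl fun j _ => ?_
    exact dist_comm _ _
  have h2 : avgD x y₀ ≤ (∑ j, avgD x (z j)) / m := by
    rw [le_div_iff₀ hm']
    calc avgD x y₀ * m = ∑ _j : Fin m, avgD x y₀ := by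
          simp [Finset.sum_const, mul_comm]
      _ ≤ ∑ j, avgD x (z j) := Finset.sum_le_sum fun j _ => h₀ (z j)
  have h3 : (∑ i, avgD z (x i)) / n ≤ avgD z y₁ := by
    rw [div_le_iff₀ hn']
    calc ∑ i, avgD z (x i) ≤ ∑ _i : Fin n, avgD z y₁ :=
          Finset.sum_le_sum fun i _ => h₁ (x i)
      _ = avgD z y₁ * n := by simp [Finset.sum_const, mul_comm]
  calc avgD x y₀ ≤ (∑ j, avgD x (z j)) / m := h2
    _ = (∑ i, avgD z (x i)) / n := key
    _ ≤ avgD z y₁ := h3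

variable (X) in
def AS : Set ℝ :=
  {r | ∃ n, 0 < n ∧ ∃ x : Fin n → X, ∃ y₀, avgD x y₀ = r ∧ ∀ y, r ≤ avgD x y}

variable (X) in
noncomputable def rendez : ℝ := sSup (AS X)

lemma AS_nonempty : (AS X).Nonempty := by
  obtain ⟨y₀, h⟩ := exists_min (fun _ : Fin 1 => Classical.arbitrary X)
  exact ⟨_, 1, one_pos, _, y₀, rfl, h⟩

lemma AS_le_max {m : ℕ} (hm : 0 < m) (z : Fin m → X) {y₁ : X}
    (h₁ : ∀ y, avgD z y ≤ avgD z y₁) : ∀ r ∈ AS X, r ≤ avgD z y₁ := by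
  rintro r ⟨n, hn, x, y₀, rfl, h₀⟩
  exact cross hn hm x z h₀ h₁

lemma AS_bddAbove : BddAbove (AS X) := by
  obtain ⟨y₁, h⟩ := exists_max (fun _ : Fin 1 => Classical.arbitrary X)
  exact ⟨_, AS_le_max one_pos _ h⟩

lemma min_le_rendez {r : ℝ} (hr : r ∈ AS X) : r ≤ rendez X := le_csSup AS_bddAbove hr

lemma rendez_le_max {m : ℕ} (hm : 0 < m) (z : Fin m → X) {y₁ : X}
    (h₁ : ∀ y, avgD z y ≤ avgD z y₁) : rendez X ≤ avgD z y₁ :=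
  csSup_le AS_nonempty (AS_le_max hm z h₁)

lemma exists_avg_eq_rendez [ConnectedSpace X] {n : ℕ} (hn : 0 < n) (x : Fin n → X) :
    ∃ y, avgD x y = rendez X := by
  obtain ⟨y₀, h₀⟩ := exists_min x
  obtain ⟨y₁, h₁⟩ := exists_max x
  have hmem : rendez X ∈ Set.Icc (avgD x y₀) (avgD x y₁) :=
    ⟨min_le_rendez ⟨n, hn, x, y₀, rfl, h₀⟩, rendez_le_max hn x h₁⟩
  exact intermediate_value_univ y₀ y₁ (continuous_avgD x) hmem




lemma minimax {k : ℕ} (hk : 0 < k) (A : Fin k → Fin k → ℝ) (hA : ∀ i j, A i j = A j i) :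
    ∃ (v : ℝ) (μ ν : Fin k → ℝ), (∀ j, 0 ≤ μ j) ∧ (∑ j, μ j = 1) ∧ (∀ j, 0 ≤ ν j) ∧
      (∑ j, ν j = 1) ∧ (∀ i, ∑ j, ν j * A i j ≤ v) ∧ (∀ i, v ≤ ∑ j, μ j * A i j) := by
  classical
  have : Nonempty (Fin k) := ⟨⟨0, hk⟩⟩
  -- the linear "payoff" map
  let L : (Fin k → ℝ) →ₗ[ℝ] (Fin k → ℝ) :=
    { toFun := fun w i => ∑ j, w j * A i j
      map_add' := by
        intro a b; funext i; simp [add_mul, Finset.sum_add_distrib]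
      map_smul' := by
        intro c a; funext i; simp [Finset.mul_sum, mul_assoc] }
  have hLcont : ∀ i, Continuous fun w : Fin k → ℝ => (L w : Fin k → ℝ) i := by
    intro i
    show Continuous fun w : Fin k → ℝ => ∑ j, w j * A i j
    exact continuous_finset_sum _ fun j _ => (continuous_apply j).mul continuous_const
  have hΔc : IsCompact (stdSimplex ℝ (Fin k)) := isCompact_stdSimplex _ _
  have hΔne : (stdSimplex ℝ (Fin k)).Nonempty := ⟨_, single_mem_stdSimplex ℝ ⟨0, hk⟩⟩
  set φ : (Fin k → ℝ) → ℝ := fun w => univ.sup' univ_nonempty (fun i => L w i) with hφ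
  have hφcont : Continuous φ :=
    Continuous.finset_sup'_apply univ_nonempty fun i _ => hLcont i
  obtain ⟨ν, hνΔ, hνmin'⟩ := hΔc.exists_isMinOn hΔne hφcont.continuousOn
  have hνmin : ∀ w ∈ stdSimplex ℝ (Fin k), φ ν ≤ φ w := fun w hw => hνmin' hw
  set v : ℝ := φ ν with hv
  -- conclusions about ν
  have hν_le : ∀ i, ∑ j, ν j * A i j ≤ v := fun i => Finset.le_sup' (fun i => L ν i) (mem_univ i)
  -- the convex compact image K and the open convex set O
  set K : Set (Fin k → ℝ) := L '' stdSimplex ℝ (Fin k) with hK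
  have hKconv : Convex ℝ K := (convex_stdSimplex ℝ _).linear_image L
  set O : Set (Fin k → ℝ) := {x | ∀ i, x i < v} with hO
  have hOeq : O = ⋂ i, {x : Fin k → ℝ | x i < v} := by
    ext x; simp [hO, Set.mem_iInter]
  have hOopen : IsOpen O := by
    rw [hOeq]
    exact isOpen_iInter_of_finite fun i => isOpen_lt (continuous_apply i) continuous_const
  have hOconv : Convex ℝ O := by
    rw [hOeq]
    refine convex_iInter fun i => ?_
    have he : {x : Fin k → ℝ | x i < v}
        = (LinearMap.proj i : (Fin k → ℝ) →ₗ[ℝ] ℝ) ⁻¹' Set.Iio v := rfl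
    rw [he]
    exact (convex_Iio v).linear_preimage _
  have hdisj : Disjoint O K := by
    rw [Set.disjoint_left]
    rintro x hxO ⟨w, hwΔ, rfl⟩
    have h1 : φ w < v := by
      rw [hφ, Finset.sup'_lt_iff]
      exact fun i _ => hxO i
    exact absurd (hνmin w hwΔ) (not_le.mpr h1)
  obtain ⟨f, u, hfO, hfK⟩ := geometric_hahn_banach_open hOconv hOopen hKconv hdisj
  set c : Fin k → ℝ := fun i => f (Pi.single i 1) with hc
  have hrep : ∀ x : Fin k → ℝ, f x = ∑ i, x i * c i := by
    intro x
    have hx : x = ∑ i, (x i) • (Pi.single i 1 : Fin k → ℝ) := by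
      have h1 : ∀ i, (x i) • (Pi.single i 1 : Fin k → ℝ) = Pi.single i (x i) := by
        intro i
        rw [← Pi.single_smul, smul_eq_mul, mul_one]
      simp_rw [h1]
      exact (Finset.univ_sum_single x).symm
    conv_lhs => rw [hx]
    rw [map_sum]
    exact Finset.sum_congr rfl fun i _ => by rw [map_smul, smul_eq_mul]
  -- the coefficients are nonnegative
  have hwO : ∀ ε : ℝ, 0 < ε → (fun _ : Fin k => v - ε) ∈ O := fun ε hε i => by
    simpa using hε
  have hcnn : ∀ i, 0 ≤ c i := by
    intro i
    by_contra hci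
    push_neg at hci
    set d : ℝ := -c i with hd
    have hdpos : 0 < d := by simp [hd]; linarith
    set w : Fin k → ℝ := fun _ => v - 1 with hw
    have hwmem : w ∈ O := hwO 1 one_pos
    set t : ℝ := (u - f w) / d + 1 with ht
    have htpos : 0 < t := by
      have : 0 < u - f w := sub_pos.mpr (hfO w hwmem)
      positivity
    have hmem : w - t • (Pi.single i 1 : Fin k → ℝ) ∈ O := by
      intro j
      rcases eq_or_ne j i with rfl | hji
      · simp [hw, Pi.single_apply]
        nlinarith
      · simp [hw, Pi.single_apply, hji]
    have hval : f (w - t • (Pi.single i 1 : Fin k → ℝ)) = f w + t * d := by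
      rw [map_sub, map_smul, smul_eq_mul, hd]
      ring
    have hlt := hfO _ hmem
    rw [hval] at hlt
    have : t * d = (u - f w) + d := by
      rw [ht]; field_simp
    nlinarith
  set s : ℝ := ∑ i, c i with hs
  have hsnn : 0 ≤ s := Finset.sum_nonneg fun i _ => hcnn i
  have hu0 : f (fun _ : Fin k => v - 1) < u := hfO _ (hwO 1 one_pos)
  have hνK : (L ν : Fin k → ℝ) ∈ K := ⟨ν, hνΔ, rfl⟩
  have hspos : 0 < s := by
    rcases hsnn.lt_or_eq with h | h
    · exact h
    · exfalso
      have hz : ∀ i ∈ univ, c i = 0 :=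
        (Finset.sum_eq_zero_iff_of_nonneg fun i _ => hcnn i).mp h.symm
      have hf0 : ∀ x : Fin k → ℝ, f x = 0 := by
        intro x
        rw [hrep]
        exact Finset.sum_eq_zero fun i _ => by rw [hz i (mem_univ i), mul_zero]
      rw [hf0] at hu0
      have := hfK _ hνK
      rw [hf0] at this
      linarith
  have hvs_le_u : v * s ≤ u := by
    by_contra h
    push_neg at h
    set ε : ℝ := (v * s - u) / s with hε
    have hεpos : 0 < ε := by
      apply div_pos _ hspos
      linarith
    have h1 := hfO _ (hwO ε hεpos)
    rw [hrep] at h1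
    have h2 : ∑ i, (v - ε) * c i = (v - ε) * s := by
      rw [hs, Finset.mul_sum]
    rw [h2] at h1
    have h3 : ε * s = v * s - u := by
      rw [hε]; field_simp
    nlinarith
  have hcol : ∀ j, u ≤ ∑ i, A i j * c i := by
    intro j
    have hmem : (L (Pi.single j 1) : Fin k → ℝ) ∈ K := ⟨_, single_mem_stdSimplex ℝ j, rfl⟩
    have h1 := hfK _ hmem
    rw [hrep] at h1
    have h2 : ∀ i, (L (Pi.single j 1) : Fin k → ℝ) i = A i j := by
      intro i
      show ∑ l, (Pi.single j 1 : Fin k → ℝ) l * A i l = A i j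
      rw [Finset.sum_eq_single j]
      · simp
      · intro b _ hb; simp [Pi.single_apply, hb]
      · intro hj; exact absurd (mem_univ j) hj
    simp_rw [h2] at h1
    exact h1
  refine ⟨v, fun i => c i / s, ν, fun i => div_nonneg (hcnn i) hsnn, ?_, hνΔ.1, hνΔ.2, hν_le, ?_⟩
  · rw [← Finset.sum_div, ← hs, div_self hspos.ne']
  · intro i
    have h1 : ∑ j, c j / s * A i j = (∑ j, A j i * c j) / s := by
      rw [Finset.sum_div]
      exact Finset.sum_congr rfl fun j _ => by rw [hA i j]; ring
    rw [h1, le_div_iff₀ hspos]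
    calc v * s ≤ u := hvs_le_u
      _ ≤ ∑ j, A j i * c j := hcol i




lemma ratapprox {k : ℕ} (hk : 0 < k) (w : Fin k → ℝ) (hw0 : ∀ j, 0 ≤ w j)
    (hw1 : ∑ j, w j = 1) {δ : ℝ} (hδ : 0 < δ) :
    ∃ c : Fin k → ℕ, 0 < ∑ j, c j ∧
      ∀ j, |(c j : ℝ) / ((∑ j, c j : ℕ) : ℝ) - w j| ≤ δ := by
  obtain ⟨N, hN⟩ := exists_nat_ge ((k : ℝ) / δ + k + 1)
  have hk' : (1:ℝ) ≤ k := by exact_mod_cast hk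
  have hNk : (k : ℝ) / δ + k + 1 ≤ N := hN
  have hkδ : 0 < (k:ℝ)/δ := by positivity
  set c : Fin k → ℕ := fun j => ⌊(N:ℝ) * w j⌋₊ with hc
  set T : ℕ := ∑ j, c j with hT
  have hcub : ∀ j, (c j : ℝ) ≤ N * w j := fun j =>
    Nat.floor_le (mul_nonneg (Nat.cast_nonneg N) (hw0 j))
  have hclb : ∀ j, (N:ℝ) * w j < c j + 1 := fun j => Nat.lt_floor_add_one _
  have hTub : (T : ℝ) ≤ N := by
    rw [hT]
    push_cast
    calc ∑ j, (c j : ℝ) ≤ ∑ j, (N:ℝ) * w j := Finset.sum_le_sum fun j _ => hcub j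
      _ = N := by rw [← Finset.mul_sum, hw1, mul_one]
  have hTlb : (N : ℝ) - k < T := by
    rw [hT]
    push_cast
    have : ∑ j, ((N:ℝ) * w j - 1) < ∑ j, (c j : ℝ) :=
      Finset.sum_lt_sum_of_nonempty ⟨⟨0, hk⟩, mem_univ _⟩ fun j _ => by linarith [hclb j]
    calc (N:ℝ) - k = ∑ j, ((N:ℝ) * w j - 1) := by
          rw [Finset.sum_sub_distrib, ← Finset.mul_sum, hw1, mul_one]
          simp
      _ < ∑ j, (c j : ℝ) := this
  have hNkpos : (0:ℝ) < N - k := by linarith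
  have hTpos : (0:ℝ) < T := by linarith
  have hTposn : 0 < T := by exact_mod_cast hTpos
  have hδT : 1 ≤ δ * T ∧ (k:ℝ) ≤ δ * T := by
    have h1 : (k:ℝ) ≤ δ * ((k:ℝ)/δ) := by
      rw [mul_div_cancel₀ _ hδ.ne']
    have h2 : δ * ((k:ℝ)/δ + 1) ≤ δ * ((N:ℝ) - k) := by
      apply mul_le_mul_of_nonneg_left _ hδ.le
      linarith
    have h3 : δ * ((N:ℝ) - k) ≤ δ * T := mul_le_mul_of_nonneg_left (by linarith) hδ.le
    constructor <;> nlinarith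
  refine ⟨c, hTposn, fun j => ?_⟩
  have hwub : w j ≤ 1 := by
    calc w j ≤ ∑ i, w i := Finset.single_le_sum (fun i _ => hw0 i) (mem_univ j)
      _ = 1 := hw1
  rw [abs_le]
  have heq : (c j : ℝ) / T - w j = ((c j : ℝ) - w j * T) / T := by
    field_simp
  constructor
  · rw [heq, le_div_iff₀ hTpos]
    -- w j * T - c j ≤ δ * T ; from w j * T ≤ w j * N ≤ c j + 1
    have h1 : w j * (T:ℝ) ≤ w j * N := mul_le_mul_of_nonneg_left hTub (hw0 j)
    nlinarith [hclb j, hδT.1]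
  · rw [heq, div_le_iff₀ hTpos]
    -- c j - w j * T ≤ N w j - w j T = w j (N - T) ≤ N - T ≤ k ≤ δ T
    have h1 : (c j : ℝ) - w j * T ≤ w j * ((N:ℝ) - T) := by nlinarith [hcub j]
    have h2 : w j * ((N:ℝ) - T) ≤ (N:ℝ) - T := by nlinarith [hw0 j]
    nlinarith [hδT.2]


lemma exists_tuple {k : ℕ} (p : Fin k → X) (c : Fin k → ℕ) :
    ∃ (n : ℕ) (x : Fin n → X), n = ∑ j, c j ∧
      ∀ y : X, ∑ t, dist y (x t) = ∑ j, (c j : ℝ) * dist y (p j) := by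
  classical
  let e := Fintype.equivFin (Σ j, Fin (c j))
  refine ⟨Fintype.card (Σ j, Fin (c j)), fun t => p (e.symm t).1, ?_, ?_⟩
  · rw [Fintype.card_sigma]
    simp
  · intro y
    have h1 : ∑ t, dist y (p (e.symm t).1) = ∑ s : Σ j, Fin (c j), dist y (p s.1) :=
      Equiv.sum_comp e.symm (fun s : Σ j, Fin (c j) => dist y (p s.1))
    rw [h1, ← Finset.univ_sigma_univ, Finset.sum_sigma]
    refine Finset.sum_congr rfl fun j _ => ?_
    show ∑ _s : Fin (c j), dist y (p j) = _
    rw [Finset.sum_const, Finset.card_univ, Fintype.card_fin, nsmul_eq_mul]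

lemma key (ε : ℝ) (hε : 0 < ε) :
    ∃ (m : ℕ), 0 < m ∧ ∃ (z : Fin m → X) (y₁ : X),
      (∀ y, avgD z y ≤ avgD z y₁) ∧ avgD z y₁ ≤ rendez X + ε := by
  classical
  set C : ℝ := Metric.diam (Set.univ : Set X) with hC
  have hCnn : 0 ≤ C := Metric.diam_nonneg
  have hdistC : ∀ a b : X, dist a b ≤ C := fun a b =>
    Metric.dist_le_diam_of_mem isCompact_univ.isBounded trivial trivial
  set ε' : ℝ := ε / 4 with hε'
  have hε'pos : 0 < ε' := by positivity
  obtain ⟨t, -, htfin, hcov⟩ := finite_cover_balls_of_compact (isCompact_univ : IsCompact (Set.univ : Set X)) hε'pos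
  set F := htfin.toFinset with hF
  have hFne : Nonempty ↥F := by
    have hy : (Classical.arbitrary X) ∈ ⋃ x ∈ t, Metric.ball x ε' := hcov trivial
    simp only [Set.mem_iUnion] at hy
    obtain ⟨a, ha, -⟩ := hy
    exact ⟨⟨a, by simp [hF, ha]⟩⟩
  set k := Fintype.card ↥F with hk
  have hkpos : 0 < k := Fintype.card_pos
  set e := Fintype.equivFin ↥F with he
  set p : Fin k → X := fun i => ((e.symm i : ↥F) : X) with hp
  have hcov' : ∀ y : X, ∃ i, dist y (p i) < ε' := by
    intro y
    have hy : y ∈ ⋃ x ∈ t, Metric.ball x ε' := hcov trivial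
    simp only [Set.mem_iUnion] at hy
    obtain ⟨a, ha, hball⟩ := hy
    refine ⟨e ⟨a, by simp [hF, ha]⟩, ?_⟩
    rw [hp]
    simp only [Equiv.symm_apply_apply]
    exact Metric.mem_ball.mp hball
  obtain ⟨v, μ, ν, hμ0, hμ1, hν0, hν1, hνle, hμge⟩ :=
    minimax hkpos (fun i j => dist (p i) (p j)) (fun i j => dist_comm _ _)
  set δ : ℝ := ε' / ((k:ℝ) * C + 1) with hδ
  have hkC : (0:ℝ) < (k:ℝ) * C + 1 := by positivity
  have hδpos : 0 < δ := by positivity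
  have hδC : δ * ((k:ℝ) * C + 1) = ε' := div_mul_cancel₀ _ hkC.ne'
  have hkδC : (k:ℝ) * δ * C ≤ ε' := by nlinarith [hδpos]
  -- for any weight vector build an approximating tuple
  have main : ∀ w : Fin k → ℝ, (∀ j, 0 ≤ w j) → (∑ j, w j = 1) →
      ∃ (m : ℕ), 0 < m ∧ ∃ z : Fin m → X, ∀ y,
        |avgD z y - ∑ j, w j * dist y (p j)| ≤ ε' := by
    intro w hw0 hw1
    obtain ⟨c, hcpos, hcapprox⟩ := ratapprox hkpos w hw0 hw1 hδpos
    obtain ⟨m, z, hm, hz⟩ := exists_tuple p c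
    have hmpos : 0 < m := hm ▸ hcpos
    refine ⟨m, hmpos, z, fun y => ?_⟩
    have hmR : (m:ℝ) = ((∑ j, c j : ℕ) : ℝ) := by exact_mod_cast congrArg Nat.cast hm
    have h1 : avgD z y = ∑ j, ((c j : ℝ) / ((∑ j, c j : ℕ):ℝ)) * dist y (p j) := by
      rw [avgD, hz y, hmR, Finset.sum_div]
      exact Finset.sum_congr rfl fun j _ => by rw [div_mul_eq_mul_div]
    rw [h1, ← Finset.sum_sub_distrib]
    calc |∑ j, ((c j : ℝ) / ((∑ j, c j : ℕ):ℝ) * dist y (p j) - w j * dist y (p j))|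
        ≤ ∑ j, |(c j : ℝ) / ((∑ j, c j : ℕ):ℝ) * dist y (p j) - w j * dist y (p j)| :=
          Finset.abs_sum_le_sum_abs _ _
      _ ≤ ∑ _j : Fin k, δ * C := by
          refine Finset.sum_le_sum fun j _ => ?_
          rw [← sub_mul, abs_mul, abs_of_nonneg dist_nonneg]
          exact mul_le_mul (hcapprox j) (hdistC _ _) dist_nonneg hδpos.le
      _ = (k:ℝ) * δ * C := by
          rw [Finset.sum_const, Finset.card_univ, Fintype.card_fin, nsmul_eq_mul]
          ring
      _ ≤ ε' := hkδC
  -- ν-side tuple: small maximum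
  obtain ⟨m, hmpos, z, hzapp⟩ := main ν hν0 hν1
  obtain ⟨y₁, hy₁⟩ := exists_max z
  -- μ-side tuple: large minimum
  obtain ⟨m', hm'pos, x, hxapp⟩ := main μ hμ0 hμ1
  obtain ⟨y₀, hy₀⟩ := exists_min x
  -- v ≤ rendez X + 2 ε'
  have hvA : v ≤ rendez X + 2 * ε' := by
    obtain ⟨i, hi⟩ := hcov' y₀
    have h1 : v ≤ ∑ j, μ j * dist (p i) (p j) := hμge i
    have h2 : ∑ j, μ j * dist (p i) (p j) ≤ ∑ j, μ j * (dist y₀ (p j) + ε') := by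
      refine Finset.sum_le_sum fun j _ => mul_le_mul_of_nonneg_left ?_ (hμ0 j)
      calc dist (p i) (p j) ≤ dist (p i) y₀ + dist y₀ (p j) := dist_triangle _ _ _
        _ ≤ dist y₀ (p j) + ε' := by rw [dist_comm (p i) y₀]; linarith
    have h3 : ∑ j, μ j * (dist y₀ (p j) + ε') = (∑ j, μ j * dist y₀ (p j)) + ε' := by
      simp_rw [mul_add, Finset.sum_add_distrib, ← Finset.sum_mul, hμ1, one_mul]
    have h4 : ∑ j, μ j * dist y₀ (p j) ≤ avgD x y₀ + ε' := by
      have := hxapp y₀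
      rw [abs_le] at this
      linarith [this.1]
    have h5 : avgD x y₀ ≤ rendez X :=
      min_le_rendez ⟨m', hm'pos, x, y₀, rfl, hy₀⟩
    linarith
  -- avgD z y₁ ≤ v + 2 ε'
  have hzv : avgD z y₁ ≤ v + 2 * ε' := by
    obtain ⟨i, hi⟩ := hcov' y₁
    have h1 : avgD z y₁ ≤ ∑ j, ν j * dist y₁ (p j) + ε' := by
      have := hzapp y₁
      rw [abs_le] at this
      linarith [this.2]
    have h2 : ∑ j, ν j * dist y₁ (p j) ≤ ∑ j, ν j * (dist (p i) (p j) + ε') := by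
      refine Finset.sum_le_sum fun j _ => mul_le_mul_of_nonneg_left ?_ (hν0 j)
      calc dist y₁ (p j) ≤ dist y₁ (p i) + dist (p i) (p j) := dist_triangle _ _ _
        _ ≤ dist (p i) (p j) + ε' := by linarith
    have h3 : ∑ j, ν j * (dist (p i) (p j) + ε') = (∑ j, ν j * dist (p i) (p j)) + ε' := by
      simp_rw [mul_add, Finset.sum_add_distrib, ← Finset.sum_mul, hν1, one_mul]
    have h4 : ∑ j, ν j * dist (p i) (p j) ≤ v := hνle i
    linarith
  exact ⟨m, hmpos, z, y₁, hy₁, by linarith⟩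


end GrossAux

/-- Gross's rendezvous theorem: every nonempty compact connected metric space has a
unique rendezvous number `r`: for every `n ≥ 1` and points `x₁,…,xₙ` there is `x` whose
average distance to the `xⱼ` equals `r`. -/
theorem gross_rendezvous {X : Type*} [MetricSpace X] [CompactSpace X] [ConnectedSpace X]
    [Nonempty X] :
    ∃! r : ℝ, ∀ n : ℕ, 0 < n → ∀ x : Fin n → X, ∃ y : X,
      (∑ j, dist y (x j)) / (n : ℝ) = r := by
  refine ⟨GrossAux.rendez X, ?_, ?_⟩
  · intro n hn x
    obtain ⟨y, hy⟩ := GrossAux.exists_avg_eq_rendez hn x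
    exact ⟨y, hy⟩
  · intro r hr
    have h1 : GrossAux.rendez X ≤ r := by
      apply csSup_le GrossAux.AS_nonempty
      rintro s ⟨n, hn, x, y₀, rfl, h₀⟩
      obtain ⟨y, hy⟩ := hr n hn x
      calc GrossAux.avgD x y₀ ≤ GrossAux.avgD x y := h₀ y
        _ = r := hy
    have h2 : r ≤ GrossAux.rendez X := by
      by_contra h
      push_neg at h
      obtain ⟨m, hm, z, y₁, hmax, hle⟩ :=
        GrossAux.key (X := X) ((r - GrossAux.rendez X) / 2) (by linarith)
      obtain ⟨y, hy⟩ := hr m hm z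
      have hry : r ≤ GrossAux.avgD z y₁ := hy ▸ hmax y
      linarith
    exact le_antisymm h2 h1
end

section
/- For the Chebyshev polynomial T_n(x) := ((x+√(x²−1))ⁿ + (x−√(x²−1))ⁿ)/2 and any real x with |x| > 1, T_n(|x|) = sup { |p(x)| : p a real polynomial of degree ≤ n, |p(t)| ≤ 1 for all t ∈ [−1,1] }; that is, the Chebyshev polynomial is extremal for the Chebyshev growth problem outside the unit interval. -/
open Polynomial Real Set


lemma natDegree_T_le : ∀ n : ℕ, (Polynomial.Chebyshev.T ℝ (n : ℤ)).natDegree ≤ n := by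
  intro n
  induction n using Nat.twoStepInduction with
  | zero => simp [Polynomial.Chebyshev.T_zero]
  | one => simp [Polynomial.Chebyshev.T_one]
  | more n ih1 ih2 =>
    have e2 : ((↑(n+2) : ℤ)) = (n:ℤ) + 2 := by push_cast; ring
    have e1 : ((n:ℤ) + 1) = ((↑(n+1) : ℤ)) := by push_cast; ring
    rw [e2, Polynomial.Chebyshev.T_add_two, e1]
    refine le_trans (natDegree_sub_le _ _) (max_le ?_ (by omega))
    refine le_trans (natDegree_mul_le) ?_
    have h1 : ((2 : ℝ[X]) * X).natDegree ≤ 1 :=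
      le_trans (natDegree_mul_le) (by simp)
    have := ih2
    omega

lemma T_eval_abs_le (n : ℤ) {t : ℝ} (ht : t ∈ Set.Icc (-1:ℝ) 1) :
    |(Polynomial.Chebyshev.T ℝ n).eval t| ≤ 1 := by
  obtain ⟨ht1, ht2⟩ := ht
  rw [show t = Real.cos (Real.arccos t) from (Real.cos_arccos ht1 ht2).symm,
    Polynomial.Chebyshev.T_real_cos]
  exact Real.abs_cos_le_one _


lemma T_eval_closed (y : ℝ) (hy : 1 ≤ y^2) (n : ℕ) :
    (Polynomial.Chebyshev.T ℝ (n:ℤ)).eval y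
      = ((y + Real.sqrt (y^2-1))^n + (y - Real.sqrt (y^2-1))^n)/2 := by
  set s := Real.sqrt (y^2-1) with hsdef
  have hs2 : s^2 = y^2 - 1 := Real.sq_sqrt (by linarith)
  induction n using Nat.twoStepInduction with
  | zero => simp [Polynomial.Chebyshev.T_zero]
  | one => simp [Polynomial.Chebyshev.T_one]
  | more n ih1 ih2 =>
    have e2 : ((↑(n+2) : ℤ)) = (n:ℤ) + 2 := by push_cast; ring
    have e1 : ((n:ℤ) + 1) = ((↑(n+1) : ℤ)) := by push_cast; ring
    rw [e2, Polynomial.Chebyshev.T_add_two, e1]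
    simp only [eval_sub, eval_mul, eval_X, eval_ofNat]
    rw [ih2, ih1]
    have key : (y+s)*(y-s) = 1 := by nlinarith
    have expand : (y+s)^(n+2) + (y-s)^(n+2)
        = ((y+s)+(y-s))*((y+s)^(n+1) + (y-s)^(n+1)) - ((y+s)*(y-s))*((y+s)^n + (y-s)^n) := by
      ring
    rw [key] at expand
    field_simp
    linarith [expand]

lemma abs_T_eval (n : ℕ) (x : ℝ) (hx : 1 < |x|) :
    |(Polynomial.Chebyshev.T ℝ (n:ℤ)).eval x|
      = ((|x| + Real.sqrt (x^2-1))^n + (|x| - Real.sqrt (x^2-1))^n)/2 := by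
  have hx2 : 1 ≤ x^2 := by nlinarith [sq_abs x]
  set s := Real.sqrt (x^2-1) with hsdef
  have hs0 : 0 ≤ s := Real.sqrt_nonneg _
  have hslt : s < |x| := by
    rw [hsdef, show |x| = Real.sqrt (x^2) by rw [Real.sqrt_sq_eq_abs]]
    exact Real.sqrt_lt_sqrt (by linarith) (by linarith)
  have hb : 0 < |x| - s := by linarith
  have hM : 0 < ((|x| + s)^n + (|x| - s)^n)/2 := by positivity
  rw [T_eval_closed x hx2 n]
  rcases le_or_gt 0 x with h | h
  · rw [abs_of_nonneg h] at *
    rw [abs_of_pos]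
    linarith [hM]
  · rw [abs_of_neg h] at *
    have p1 : (x+s)^n = (-1:ℝ)^n * (-x-s)^n := by
      rw [show x + s = -(-x-s) by ring, neg_pow]
    have p2 : (x-s)^n = (-1:ℝ)^n * (-x+s)^n := by
      rw [show x - s = -(-x+s) by ring, neg_pow]
    rw [p1, p2,
      show ((-1:ℝ)^n * (-x-s)^n + (-1)^n * (-x+s)^n)/2
        = (-1:ℝ)^n * (((-x+s)^n + (-x-s)^n)/2) by ring,
      abs_mul, abs_pow, abs_neg, abs_one, one_pow, one_mul, abs_of_pos hM]

lemma key_bound (n : ℕ) (x : ℝ) (hx : 1 < |x|) (p : ℝ[X])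
    (hdeg : p.natDegree ≤ n) (hball : ∀ t ∈ Set.Icc (-1:ℝ) 1, |p.eval t| ≤ 1) :
    |p.eval x| ≤ ((|x| + Real.sqrt (x^2-1))^n + (|x| - Real.sqrt (x^2-1))^n)/2 := by
  have hx2 : 1 ≤ x^2 := by nlinarith [sq_abs x]
  set s := Real.sqrt (x^2-1) with hsdef
  have hs0 : 0 ≤ s := Real.sqrt_nonneg _
  have hslt : s < |x| := by
    rw [hsdef, show |x| = Real.sqrt (x^2) by rw [Real.sqrt_sq_eq_abs]]
    exact Real.sqrt_lt_sqrt (by linarith) (by linarith)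
  set M := ((|x| + s)^n + (|x| - s)^n)/2 with hMdef
  have hM : 0 < M := by
    have hb : 0 < |x| - s := by linarith
    positivity
  rcases Nat.eq_zero_or_pos n with hn | hn
  · subst hn
    have hp : p = C (p.coeff 0) := p.eq_C_of_natDegree_le_zero hdeg
    have h0 := hball 0 (by norm_num)
    rw [hp] at h0 ⊢
    simp only [eval_C] at h0 ⊢
    simpa [hMdef] using h0
  by_contra hcon
  push_neg at hcon
  -- setup
  have hTx := abs_T_eval n x hx
  rw [← hsdef, ← hMdef] at hTx
  have hTne : (Polynomial.Chebyshev.T ℝ (n:ℤ)).eval x ≠ 0 := by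
    intro h; rw [h] at hTx; simp at hTx; linarith
  set c : ℝ := p.eval x / (Polynomial.Chebyshev.T ℝ (n:ℤ)).eval x with hcdef
  have hc : 1 < |c| := by
    rw [hcdef, abs_div, hTx]
    exact (one_lt_div hM).2 hcon
  set q : ℝ[X] := C c * Polynomial.Chebyshev.T ℝ (n:ℤ) - p with hqdef
  have hqdeg : q.natDegree ≤ n := by
    refine le_trans (natDegree_sub_le _ _) (max_le ?_ hdeg)
    exact le_trans natDegree_mul_le (by simpa using natDegree_T_le n)
  have hqx : q.eval x = 0 := by
    simp only [hqdef, eval_sub, eval_mul, eval_C, hcdef]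
    field_simp
    ring
  -- extreme points
  have hnR : (0:ℝ) < (n:ℝ) := by exact_mod_cast hn
  set t : ℕ → ℝ := fun k => Real.cos (k * π / n) with htdef
  have harg : ∀ k : ℕ, k ≤ n → (k * π / n : ℝ) ∈ Icc 0 π := by
    intro k hk
    constructor
    · positivity
    · rw [div_le_iff₀ hnR]
      have : (k:ℝ) ≤ n := by exact_mod_cast hk
      nlinarith [Real.pi_pos]
  have hanti : ∀ j k : ℕ, j < k → k ≤ n → t k < t j := by
    intro j k hjk hk
    refine Real.strictAntiOn_cos (harg j (by omega)) (harg k hk) ?_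
    have : (j:ℝ) < k := by exact_mod_cast hjk
    rw [div_lt_div_iff₀ hnR hnR]
    nlinarith [mul_pos (mul_pos (sub_pos.2 this) Real.pi_pos) hnR]
  have htmem : ∀ k : ℕ, k ≤ n → t k ∈ Icc (-1:ℝ) 1 :=
    fun k hk => ⟨Real.neg_one_le_cos _, Real.cos_le_one _⟩
  have hTt : ∀ k : ℕ, k ≤ n → (Polynomial.Chebyshev.T ℝ (n:ℤ)).eval (t k) = (-1:ℝ)^k := by
    intro k hk
    rw [htdef]
    simp only [Polynomial.Chebyshev.T_real_cos]
    rw [show ((n:ℤ):ℝ) * ((k:ℝ) * π / n) = k * π by push_cast; field_simp]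
    simpa using Real.cos_nat_mul_pi_sub 0 k
  -- sign alternation
  set e : ℝ := if 0 ≤ c then 1 else -1 with hedef
  have he : e * c = |c| := by
    rw [hedef]; split <;> simp [abs_of_nonneg, abs_of_neg, *] <;> rename_i h
    · have hge := abs_of_nonneg h; rw [hcdef] at hge; linarith
    · have hlt := abs_of_neg (lt_of_not_ge ‹¬0 ≤ c›); rw [hcdef] at hlt; linarith
  have he2 : e * e = 1 := by rw [hedef]; split <;> norm_num
  have hpow : ∀ k : ℕ, ((-1:ℝ))^k * (-1)^k = 1 := by
    intro k; rw [← pow_add, ← two_mul, pow_mul]; norm_num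
  have hsign : ∀ k : ℕ, k ≤ n → |c| - 1 ≤ e * (-1)^k * q.eval (t k) := by
    intro k hk
    have hqv : q.eval (t k) = c * (-1)^k - p.eval (t k) := by
      simp [hqdef, eval_sub, eval_mul, eval_C, hTt k hk]
    have hval : e * (-1:ℝ)^k * q.eval (t k) = |c| - e * (-1)^k * p.eval (t k) := by
      rw [hqv, ← he]
      linear_combination (e * c) * hpow k
    have habs : e * (-1:ℝ)^k * p.eval (t k) ≤ 1 := by
      calc e * (-1:ℝ)^k * p.eval (t k) ≤ |e * (-1:ℝ)^k * p.eval (t k)| := le_abs_self _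
        _ = |p.eval (t k)| := by
            rw [abs_mul, abs_mul, abs_pow, abs_neg, abs_one, one_pow, mul_one,
              show |e| = 1 by rw [hedef]; split <;> norm_num, one_mul]
        _ ≤ 1 := hball _ (htmem k hk)
    linarith [hval, habs]
  have hGG : ∀ k : ℕ, k < n → q.eval (t (k+1)) * q.eval (t k) < 0 := by
    intro k hk
    have A := hsign k (by omega)
    have B := hsign (k+1) (by omega)
    have hA : 0 < e * (-1:ℝ)^k * q.eval (t k) := by linarith
    have hB : 0 < e * (-1:ℝ)^(k+1) * q.eval (t (k+1)) := by linarith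
    have hprod := mul_pos hA hB
    have heq : (e * (-1:ℝ)^k * q.eval (t k)) * (e * (-1:ℝ)^(k+1) * q.eval (t (k+1)))
        = -(q.eval (t (k+1)) * q.eval (t k)) := by
      have h2 : ((-1:ℝ))^k * (-1)^(k+1) = -1 := by
        rw [pow_succ]; linear_combination -hpow k
      calc (e * (-1:ℝ)^k * q.eval (t k)) * (e * (-1:ℝ)^(k+1) * q.eval (t (k+1)))
          = (e*e) * ((-1:ℝ)^k * (-1)^(k+1)) * (q.eval (t k) * q.eval (t (k+1))) := by ring
        _ = -(q.eval (t (k+1)) * q.eval (t k)) := by rw [he2, h2]; ring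
    rw [heq] at hprod
    linarith
  -- roots by IVT
  have hz : ∀ k : Fin n, ∃ z, z ∈ Ioo (t ((k:ℕ)+1)) (t (k:ℕ)) ∧ q.eval z = 0 := by
    intro ⟨k, hk⟩
    simp only []
    have hab : t (k+1) ≤ t k := le_of_lt (hanti k (k+1) (by omega) (by omega))
    have hcont : ContinuousOn (fun y => q.eval y) (Icc (t (k+1)) (t k)) :=
      q.continuous_aeval.continuousOn
    have hGGk := hGG k hk
    rcases lt_or_ge (q.eval (t (k+1))) 0 with hneg | hpos
    · have hposk : 0 < q.eval (t k) := by nlinarith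
      have h0 : (0:ℝ) ∈ Ioo (q.eval (t (k+1))) (q.eval (t k)) := ⟨hneg, hposk⟩
      obtain ⟨z, hz1, hz2⟩ := intermediate_value_Ioo hab hcont h0
      exact ⟨z, hz1, hz2⟩
    · have hposk : q.eval (t k) < 0 := by nlinarith
      have h0 : (0:ℝ) ∈ Ioo (q.eval (t k)) (q.eval (t (k+1))) := by
        constructor
        · exact hposk
        · rcases lt_or_eq_of_le hpos with h | h
          · exact h
          · exfalso; rw [← h] at hGGk; simp at hGGk
      obtain ⟨z, hz1, hz2⟩ := intermediate_value_Ioo' hab hcont h0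
      exact ⟨z, hz1, hz2⟩
  choose z hzmem hzroot using hz
  -- q ≠ 0
  have hq0 : q ≠ 0 := by
    intro h
    have := hsign 0 (by omega)
    rw [h] at this
    simp at this
    linarith
  -- counting roots
  have hzlt : ∀ j k : Fin n, (j:ℕ) < (k:ℕ) → z k < z j := by
    intro j k hjk
    have h1 : z k < t (k:ℕ) := (hzmem k).2
    have h3 : t ((j:ℕ)+1) < z j := (hzmem j).1
    have h2 : t (k:ℕ) ≤ t ((j:ℕ)+1) := by
      rcases eq_or_lt_of_le (show (j:ℕ)+1 ≤ (k:ℕ) by omega) with h | h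
      · rw [h]
      · exact le_of_lt (hanti ((j:ℕ)+1) (k:ℕ) h (le_of_lt k.2))
    linarith
  have hinj : Function.Injective z := by
    intro a b hab
    by_contra hne
    rcases lt_trichotomy (a:ℕ) (b:ℕ) with h | h | h
    · have := hzlt a b h; rw [hab] at this; linarith
    · exact hne (Fin.ext h)
    · have := hzlt b a h; rw [hab] at this; linarith
  have ht0 : t 0 = 1 := by simp [htdef]
  have htn : t n = -1 := by
    simp only [htdef]
    rw [show ((n:ℝ) * π / n) = π by field_simp]
    exact Real.cos_pi
  have hzbound : ∀ k : Fin n, z k ∈ Ioo (-1:ℝ) 1 := by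
    intro k
    constructor
    · have h3 : t ((k:ℕ)+1) < z k := (hzmem k).1
      have : t n ≤ t ((k:ℕ)+1) := by
        rcases eq_or_lt_of_le (show (k:ℕ)+1 ≤ n from k.2) with h | h
        · rw [h]
        · exact le_of_lt (hanti _ _ h le_rfl)
      rw [htn] at this; linarith
    · have h1 : z k < t (k:ℕ) := (hzmem k).2
      have : t (k:ℕ) ≤ t 0 := by
        rcases Nat.eq_zero_or_pos (k:ℕ) with h | h
        · rw [h]
        · exact le_of_lt (hanti 0 _ h (le_of_lt k.2))
      rw [ht0] at this; linarith
  set F : Finset ℝ := insert x (Finset.image z Finset.univ) with hFdef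
  have hxnot : x ∉ Finset.image z Finset.univ := by
    intro hmem
    obtain ⟨k, _, hk⟩ := Finset.mem_image.1 hmem
    have hz1 := hzbound k
    rw [hk] at hz1
    have : |x| < 1 := abs_lt.2 ⟨hz1.1, hz1.2⟩
    linarith
  have hcard : F.card = n + 1 := by
    rw [hFdef, Finset.card_insert_of_notMem hxnot,
      Finset.card_image_of_injective _ hinj, Finset.card_univ, Fintype.card_fin]
  have hsub : F.val ⊆ q.roots := by
    intro a ha
    rw [Polynomial.mem_roots hq0]
    rw [Finset.mem_val, hFdef, Finset.mem_insert] at ha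
    rcases ha with rfl | ha
    · exact hqx
    · obtain ⟨k, _, rfl⟩ := Finset.mem_image.1 ha
      exact hzroot k
  have := Polynomial.card_le_degree_of_subset_roots hsub
  omega


/-- For `|x| > 1`, the Chebyshev polynomial value
`T_n(|x|) = ((|x|+√(x²-1))ⁿ + (|x|-√(x²-1))ⁿ)/2` equals the Chebyshev extremal quantity
`sup { |p(x)| : deg p ≤ n, ‖p‖_{[-1,1]} ≤ 1 }`. -/
theorem chebyshev_growth (n : ℕ) (x : ℝ) (hx : 1 < |x|) :
    ((|x| + Real.sqrt (x ^ 2 - 1)) ^ n + (|x| - Real.sqrt (x ^ 2 - 1)) ^ n) / 2 =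
      sSup {y : ℝ | ∃ p : Polynomial ℝ, p.natDegree ≤ n ∧
        (∀ t ∈ Set.Icc (-1 : ℝ) 1, |p.eval t| ≤ 1) ∧ y = |p.eval x|} := by
  set M := ((|x| + Real.sqrt (x ^ 2 - 1)) ^ n + (|x| - Real.sqrt (x ^ 2 - 1)) ^ n) / 2 with hMdef
  have hmem : M ∈ {y : ℝ | ∃ p : Polynomial ℝ, p.natDegree ≤ n ∧
      (∀ t ∈ Set.Icc (-1 : ℝ) 1, |p.eval t| ≤ 1) ∧ y = |p.eval x|} := by
    refine ⟨Polynomial.Chebyshev.T ℝ (n:ℤ), natDegree_T_le n,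
      fun t ht => T_eval_abs_le (n:ℤ) ht, ?_⟩
    rw [hMdef, ← abs_T_eval n x hx]
  have hub : ∀ y ∈ {y : ℝ | ∃ p : Polynomial ℝ, p.natDegree ≤ n ∧
      (∀ t ∈ Set.Icc (-1 : ℝ) 1, |p.eval t| ≤ 1) ∧ y = |p.eval x|}, y ≤ M := by
    rintro y ⟨p, hdeg, hb, rfl⟩
    exact key_bound n x hx p hdeg hb
  exact le_antisymm (le_csSup ⟨M, hub⟩ hmem) (csSup_le ⟨M, hmem⟩ hub)
end
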